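/- arXiv:1403.0184 — 4 statements merged into one kernel-verified Lean document; each statement's English description precedes it below -/
import Mathlib

section
/- Let f ∈ ℤ[X] be of degree d ≥ 1 with associated binary form F. Then for every prime p and every integer k ≥ 1 one has #{(a,b) ∈ [1,p^k]² : gcd(a,b,p) = 1 and p^k ∣ F(a,b)} = φ(p^k)·n_{p^k}(f), where φ is Euler's totient function. -/
open Polynomial Finset in
/-- The binary form associated to an integer polynomial `f`. -/
noncomputable def binForm (f : Polynomial ℤ) (x y : ℤ) : ℤ :=
  ∑ i ∈ Finset.range (f.natDegree + 1), f.coeff i * x ^ i * y ^ (f.natDegree - i)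

open scoped Classical in
/-- `n_{p^k}(f)`. -/
noncomputable def nRoots (f : Polynomial ℤ) (p k : ℕ) : ℕ :=
  ((Finset.range (p ^ k)).filter fun a => (p : ℤ) ^ k ∣ f.eval (a : ℤ)).card +
  ((Finset.range (p ^ k)).filter fun b => p ∣ b ∧ (p : ℤ) ^ k ∣ binForm f 1 (b : ℤ)).card

/-- The Sylvester matrix of two integer polynomials. -/
noncomputable def sylvesterMatrix (f g : Polynomial ℤ) :
    Matrix (Fin (f.natDegree + g.natDegree)) (Fin (f.natDegree + g.natDegree)) ℤ :=
  Matrix.of fun i j =>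
    if (i : ℕ) < g.natDegree then
      if (i : ℕ) ≤ (j : ℕ) ∧ (j : ℕ) ≤ (i : ℕ) + f.natDegree then
        f.coeff (f.natDegree + i - j)
      else 0
    else
      if (i : ℕ) - g.natDegree ≤ (j : ℕ) ∧ (j : ℕ) ≤ (i : ℕ) - g.natDegree + g.natDegree then
        g.coeff (g.natDegree + ((i : ℕ) - g.natDegree) - j)
      else 0

/-- The resultant of two integer polynomials. -/
noncomputable def resultant (f g : Polynomial ℤ) : ℤ := (sylvesterMatrix f g).det

/-- The discriminant of an integer polynomial. -/
noncomputable def disc (f : Polynomial ℤ) : ℤ :=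
  ((-1) ^ (f.natDegree * (f.natDegree - 1) / 2) *
    resultant f (Polynomial.derivative f)) / f.leadingCoeff

/-- Murphy's `α_p(f)`. -/
noncomputable def alphaP (f : Polynomial ℤ) (p : ℕ) : ℝ :=
  Real.log p * (1 / ((p : ℝ) - 1) -
    ((p : ℝ) / ((p : ℝ) + 1)) * ∑' k : ℕ, (nRoots f p (k + 1) : ℝ) / (p : ℝ) ^ (k + 1))

/-! ### Auxiliary definitions and lemmas for the proof -/

/-- The binary form reduced mod `N`. -/
noncomputable def BFZ (f : Polynomial ℤ) (N : ℕ) (x y : ZMod N) : ZMod N :=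
  ∑ i ∈ Finset.range (f.natDegree + 1), (f.coeff i : ZMod N) * x ^ i * y ^ (f.natDegree - i)

lemma BFZ_cast (f : Polynomial ℤ) (N : ℕ) (a b : ℤ) :
    ((binForm f a b : ℤ) : ZMod N) = BFZ f N (a : ZMod N) (b : ZMod N) := by
  unfold binForm BFZ
  push_cast
  rfl

lemma BFZ_homog (f : Polynomial ℤ) (N : ℕ) (x y c : ZMod N) :
    BFZ f N (x * c) (y * c) = c ^ f.natDegree * BFZ f N x y := by
  unfold BFZ
  rw [Finset.mul_sum]
  refine Finset.sum_congr rfl fun i hi => ?_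
  have hle : i ≤ f.natDegree := Nat.lt_succ_iff.mp (Finset.mem_range.mp hi)
  have hc : c ^ i * c ^ (f.natDegree - i) = c ^ f.natDegree := by
    rw [← pow_add]; congr 1; omega
  rw [mul_pow, mul_pow]
  calc (f.coeff i : ZMod N) * (x ^ i * c ^ i) *
        (y ^ (f.natDegree - i) * c ^ (f.natDegree - i))
      = (c ^ i * c ^ (f.natDegree - i)) *
        ((f.coeff i : ZMod N) * x ^ i * y ^ (f.natDegree - i)) := by ring
    _ = _ := by rw [hc]

lemma eval_cast_BFZ (f : Polynomial ℤ) (N : ℕ) (a : ℤ) :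
    ((f.eval a : ℤ) : ZMod N) = BFZ f N (a : ZMod N) 1 := by
  rw [Polynomial.eval_eq_sum_range]
  unfold BFZ
  push_cast
  simp

lemma card_range_filter_cast (N : ℕ) [NeZero N] (P : ℕ → Prop) [DecidablePred P]
    (Q : ZMod N → Prop) [DecidablePred Q]
    (hPQ : ∀ a : ℕ, P a ↔ Q ((a : ℕ) : ZMod N)) :
    ((Finset.range N).filter P).card = (Finset.univ.filter Q).card := by
  apply Finset.card_nbij' (fun a : ℕ => ((a : ℕ) : ZMod N)) (fun x : ZMod N => x.val)
  · intro a ha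
    simp only [Finset.mem_coe, Finset.mem_filter] at ha ⊢
    exact ⟨Finset.mem_univ _, (hPQ a).mp ha.2⟩
  · intro x hx
    simp only [Finset.mem_coe, Finset.mem_filter, Finset.mem_range] at hx ⊢
    refine ⟨ZMod.val_lt x, (hPQ x.val).mpr ?_⟩
    rw [ZMod.natCast_zmod_val]
    exact hx.2
  · intro a ha
    simp only [Finset.mem_coe, Finset.mem_filter, Finset.mem_range] at ha
    beta_reduce
    rw [ZMod.val_natCast, Nat.mod_eq_of_lt ha.1]
  · intro x _
    exact ZMod.natCast_zmod_val x

lemma card_Icc_sq_filter_cast (N : ℕ) [NeZero N] (P : ℕ × ℕ → Prop) [DecidablePred P]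
    (Q : ZMod N × ZMod N → Prop) [DecidablePred Q]
    (hPQ : ∀ ab : ℕ × ℕ, ab ∈ (Finset.Icc 1 N) ×ˢ (Finset.Icc 1 N) →
      (P ab ↔ Q (((ab.1 : ℕ) : ZMod N), ((ab.2 : ℕ) : ZMod N)))) :
    (((Finset.Icc 1 N) ×ˢ (Finset.Icc 1 N)).filter P).card
      = (Finset.univ.filter Q).card := by
  have hN : 0 < N := Nat.pos_of_ne_zero (NeZero.ne N)
  set j : ZMod N → ℕ := fun x => if x.val = 0 then N else x.val with hj
  have hj1 : ∀ x : ZMod N, j x ∈ Finset.Icc 1 N := by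
    intro x
    simp only [hj, Finset.mem_Icc]
    split
    · omega
    · exact ⟨by omega, le_of_lt (ZMod.val_lt x)⟩
  have hj2 : ∀ x : ZMod N, ((j x : ℕ) : ZMod N) = x := by
    intro x
    simp only [hj]
    split
    · next h =>
      have hx : x = 0 := by rw [← ZMod.natCast_zmod_val x, h]; simp
      rw [hx, ZMod.natCast_self]
    · exact ZMod.natCast_zmod_val x
  have hji : ∀ a ∈ Finset.Icc 1 N, j ((a : ℕ) : ZMod N) = a := by
    intro a ha
    rw [Finset.mem_Icc] at ha
    simp only [hj, ZMod.val_natCast]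
    rcases eq_or_lt_of_le ha.2 with h | h
    · subst h
      simp [Nat.mod_self]
    · rw [Nat.mod_eq_of_lt h, if_neg (by omega)]
  apply Finset.card_nbij' (fun ab : ℕ × ℕ => (((ab.1 : ℕ) : ZMod N), ((ab.2 : ℕ) : ZMod N)))
    (fun xy : ZMod N × ZMod N => (j xy.1, j xy.2))
  · intro ab hab
    simp only [Finset.mem_coe, Finset.mem_filter] at hab ⊢
    exact ⟨Finset.mem_univ _, (hPQ ab hab.1).mp hab.2⟩
  · intro xy hxy
    simp only [Finset.mem_coe, Finset.mem_filter, Finset.mem_product] at hxy ⊢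
    have hmem : (j xy.1, j xy.2) ∈ (Finset.Icc 1 N) ×ˢ (Finset.Icc 1 N) := by
      rw [Finset.mem_product]
      exact ⟨hj1 _, hj1 _⟩
    rw [Finset.mem_product] at hmem
    refine ⟨hmem, (hPQ _ (by rw [Finset.mem_product]; exact hmem)).mpr ?_⟩
    simpa only [hj2] using hxy.2
  · intro ab hab
    simp only [Finset.mem_coe, Finset.mem_filter, Finset.mem_product] at hab
    exact Prod.ext (hji _ hab.1.1) (hji _ hab.1.2)
  · intro xy _
    exact Prod.ext (hj2 _) (hj2 _)

open scoped Classical in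
/-- for `f ∈ ℤ[X]` of degree `d ≥ 1`, every prime `p` and `k ≥ 1`,
`#{(a,b) ∈ [1,p^k]² : gcd(a,b,p) = 1, p^k ∣ F(a,b)} = φ(p^k)·n_{p^k}(f)`. -/
theorem card_pairs_eq_totient_mul_nRoots (f : Polynomial ℤ) (hd : 1 ≤ f.natDegree)
    (p : ℕ) (hp : p.Prime) (k : ℕ) (hk : 1 ≤ k) :
    (((Finset.Icc 1 (p ^ k)) ×ˢ (Finset.Icc 1 (p ^ k))).filter fun ab : ℕ × ℕ =>
        Nat.gcd (Nat.gcd ab.1 ab.2) p = 1 ∧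
        (p : ℤ) ^ k ∣ binForm f (ab.1 : ℤ) (ab.2 : ℤ)).card =
      Nat.totient (p ^ k) * nRoots f p k := by
  classical
  have hk0 : k ≠ 0 := by omega
  have hN0 : p ^ k ≠ 0 := pow_ne_zero k hp.pos.ne'
  haveI : NeZero (p ^ k) := ⟨hN0⟩
  haveI : Fact p.Prime := ⟨hp⟩
  set N := p ^ k with hNdef
  have hdvd : p ∣ N := dvd_pow_self p hk0
  set φm : ZMod N →+* ZMod p := ZMod.castHom hdvd (ZMod p) with hφ
  set d := f.natDegree with hd'
  -- characterization of units in `ZMod N`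
  have hφnat : ∀ a : ℕ, φm ((a : ℕ) : ZMod N) = ((a : ℕ) : ZMod p) := fun a => map_natCast φm a
  have hunit : ∀ x : ZMod N, IsUnit x ↔ φm x ≠ 0 := by
    intro x
    conv_lhs => rw [← ZMod.natCast_zmod_val x]
    have hx : φm x = ((x.val : ℕ) : ZMod p) := by
      conv_lhs => rw [← ZMod.natCast_zmod_val x]
      exact hφnat x.val
    rw [ZMod.isUnit_iff_coprime, hx, Ne, ZMod.natCast_eq_zero_iff]
    show x.val.Coprime (p ^ k) ↔ ¬p ∣ x.val
    rw [Nat.coprime_pow_right_iff (by omega), Nat.coprime_comm]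
    exact hp.coprime_iff_not_dvd
  -- divisibility transfers
  have hpow : ((N : ℕ) : ℤ) = (p : ℤ) ^ k := by rw [hNdef]; push_cast; ring
  have hdvdInt : ∀ z : ℤ, (p : ℤ) ^ k ∣ z ↔ ((z : ℤ) : ZMod N) = 0 := by
    intro z
    rw [ZMod.intCast_zmod_eq_zero_iff_dvd, hpow]
  have hdvdNat : ∀ a : ℕ, p ∣ a ↔ φm ((a : ℕ) : ZMod N) = 0 := by
    intro a
    rw [hφnat, ZMod.natCast_eq_zero_iff]
  -- the condition on `ZMod N × ZMod N`
  set Qc : ZMod N × ZMod N → Prop :=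
    fun xy => (¬(φm xy.1 = 0 ∧ φm xy.2 = 0)) ∧ BFZ f N xy.1 xy.2 = 0 with hQc
  -- finsets
  set A : Finset (ZMod N × ZMod N) := Finset.univ.filter Qc with hA
  set U : Finset (ZMod N) := Finset.univ.filter IsUnit with hU
  set R1 : Finset (ZMod N) := Finset.univ.filter fun r : ZMod N => BFZ f N r 1 = 0 with hR1
  set R2 : Finset (ZMod N) :=
    Finset.univ.filter fun s : ZMod N => φm s = 0 ∧ BFZ f N 1 s = 0 with hR2
  have hsplit := Finset.card_filter_add_card_filter_not
    (s := A) (p := fun xy : ZMod N × ZMod N => IsUnit xy.2)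
  -- first piece: second coordinate a unit
  have hA1 : (A.filter fun xy : ZMod N × ZMod N => IsUnit xy.2).card = (R1 ×ˢ U).card := by
    apply Finset.card_nbij' (fun xy : ZMod N × ZMod N => (xy.1 * xy.2⁻¹, xy.2))
      (fun ru : ZMod N × ZMod N => (ru.1 * ru.2, ru.2))
    · intro xy hxy
      simp only [Finset.mem_coe, hA, hQc, Finset.mem_filter, Finset.mem_univ, true_and] at hxy
      obtain ⟨⟨_, hF⟩, hy⟩ := hxy
      simp only [Finset.mem_coe, hR1, hU, Finset.mem_product, Finset.mem_filter, Finset.mem_univ, true_and]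
      refine ⟨?_, hy⟩
      have hh := BFZ_homog f N (xy.1 * xy.2⁻¹) 1 xy.2
      rw [one_mul, mul_assoc, ZMod.inv_mul_of_unit _ hy, mul_one, hF] at hh
      exact ((hy.pow d).mul_right_eq_zero).mp hh.symm
    · intro ru hru
      simp only [Finset.mem_coe, hR1, hU, Finset.mem_product, Finset.mem_filter, Finset.mem_univ,
        true_and] at hru
      obtain ⟨hr, hu⟩ := hru
      simp only [Finset.mem_coe, hA, hQc, Finset.mem_filter, Finset.mem_univ, true_and]
      have hh := BFZ_homog f N ru.1 1 ru.2
      rw [one_mul, hr, mul_zero] at hh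
      refine ⟨⟨fun hc => ?_, hh⟩, hu⟩
      exact (hunit ru.2).mp hu hc.2
    · intro xy hxy
      simp only [Finset.mem_coe, hA, hQc, Finset.mem_filter, Finset.mem_univ, true_and] at hxy
      have hy := hxy.2
      simp only [mul_assoc, ZMod.inv_mul_of_unit _ hy, mul_one]
    · intro ru hru
      simp only [Finset.mem_coe, hR1, hU, Finset.mem_product, Finset.mem_filter, Finset.mem_univ,
        true_and] at hru
      simp only [mul_assoc, ZMod.mul_inv_of_unit _ hru.2, mul_one]
  -- second piece: second coordinate not a unit
  have hA2 : (A.filter fun xy : ZMod N × ZMod N => ¬ IsUnit xy.2).card = (U ×ˢ R2).card := by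
    apply Finset.card_nbij' (fun xy : ZMod N × ZMod N => (xy.1, xy.2 * xy.1⁻¹))
      (fun us : ZMod N × ZMod N => (us.1, us.2 * us.1))
    · intro xy hxy
      simp only [Finset.mem_coe, hA, hQc, Finset.mem_filter, Finset.mem_univ, true_and] at hxy
      obtain ⟨⟨hnot, hF⟩, hy⟩ := hxy
      have hφy : φm xy.2 = 0 := by
        by_contra hc
        exact hy ((hunit xy.2).mpr hc)
      have hφx : φm xy.1 ≠ 0 := fun hc => hnot ⟨hc, hφy⟩
      have hx : IsUnit xy.1 := (hunit xy.1).mpr hφx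
      simp only [Finset.mem_coe, hU, hR2, Finset.mem_product, Finset.mem_filter, Finset.mem_univ, true_and]
      refine ⟨hx, ?_, ?_⟩
      · rw [map_mul, hφy, zero_mul]
      · have hh := BFZ_homog f N 1 (xy.2 * xy.1⁻¹) xy.1
        rw [one_mul, mul_assoc, ZMod.inv_mul_of_unit _ hx, mul_one, hF] at hh
        exact ((hx.pow d).mul_right_eq_zero).mp hh.symm
    · intro us hus
      simp only [Finset.mem_coe, hU, hR2, Finset.mem_product, Finset.mem_filter, Finset.mem_univ,
        true_and] at hus
      obtain ⟨hu, hφs, hs⟩ := hus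
      simp only [Finset.mem_coe, hA, hQc, Finset.mem_filter, Finset.mem_univ, true_and]
      have hφsu : φm (us.2 * us.1) = 0 := by rw [map_mul, hφs, zero_mul]
      have hh := BFZ_homog f N 1 us.2 us.1
      rw [one_mul, hs, mul_zero] at hh
      refine ⟨⟨fun hc => (hunit us.1).mp hu hc.1, hh⟩, fun hc => ?_⟩
      exact (hunit _).mp hc hφsu
    · intro xy hxy
      simp only [Finset.mem_coe, hA, hQc, Finset.mem_filter, Finset.mem_univ, true_and] at hxy
      obtain ⟨⟨hnot, _⟩, hy⟩ := hxy
      have hφy : φm xy.2 = 0 := by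
        by_contra hc
        exact hy ((hunit xy.2).mpr hc)
      have hx : IsUnit xy.1 := (hunit xy.1).mpr fun hc => hnot ⟨hc, hφy⟩
      simp only [mul_assoc, ZMod.inv_mul_of_unit _ hx, mul_one]
    · intro us hus
      simp only [Finset.mem_coe, hU, hR2, Finset.mem_product, Finset.mem_filter, Finset.mem_univ,
        true_and] at hus
      simp only [mul_assoc, ZMod.mul_inv_of_unit _ hus.1, mul_one]
  -- card of units is the totient
  have hUcard : U.card = Nat.totient N := by
    rw [hU, ← ZMod.card_units_eq_totient N, ← Finset.card_univ,
      ← Finset.card_image_of_injective (Finset.univ : Finset (ZMod N)ˣ)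
        (Units.val_injective : Function.Injective (Units.val : (ZMod N)ˣ → ZMod N))]
    congr 1
    ext x
    simp only [Finset.mem_filter, Finset.mem_univ, true_and, Finset.mem_image]
    constructor
    · intro h
      exact ⟨h.unit, h.unit_spec⟩
    · rintro ⟨u, hu⟩
      exact hu ▸ u.isUnit
  -- the two root counts
  have hn : nRoots f p k = R1.card + R2.card := by
    rw [hR1, hR2]
    unfold nRoots
    congr 1
    · apply Finset.card_nbij' (fun z : ℤ => ((z : ℤ) : ZMod N)) (fun x : ZMod N => (x.val : ℤ))
      · intro z hz
        simp only [Finset.mem_coe, Finset.mem_filter] at hz ⊢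
        refine ⟨Finset.mem_univ _, ?_⟩
        have h0 := (hdvdInt _).mp hz.2
        rwa [eval_cast_BFZ] at h0
      · intro x hx
        simp only [Finset.mem_coe, Finset.mem_filter, Finset.mem_univ, true_and] at hx
        rw [Finset.mem_coe, Finset.mem_filter]
        constructor
        · simp only [Bind.bind, Pure.pure, Finset.mem_sup, Finset.mem_range,
            Finset.mem_singleton]
          exact ⟨x.val, ZMod.val_lt x, rfl⟩
        · rw [hdvdInt, eval_cast_BFZ]
          have hcast : (((x.val : ℤ)) : ZMod N) = x := by
            push_cast
            exact ZMod.natCast_zmod_val x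
          rw [hcast]
          exact hx
      · intro z hz
        simp only [Finset.mem_coe, Finset.mem_filter, Bind.bind, Pure.pure, Finset.mem_sup, Finset.mem_range,
          Finset.mem_singleton] at hz
        obtain ⟨⟨a, haN, haz⟩, -⟩ := hz
        subst haz
        push_cast
        rw [ZMod.val_natCast, Nat.mod_eq_of_lt haN]
      · intro x _
        push_cast
        exact ZMod.natCast_zmod_val x
    · refine card_range_filter_cast N _ _ fun b => ?_
      rw [hdvdNat, hdvdInt, BFZ_cast]
      push_cast
      rfl
  -- main count on `ZMod N × ZMod N`
  have main : A.card = Nat.totient N * nRoots f p k := by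
    rw [← hsplit, hA1, hA2, Finset.card_product, Finset.card_product, hUcard, hn]
    ring
  -- transfer the left-hand side
  refine Eq.trans (card_Icc_sq_filter_cast N _ Qc fun ab _ => ?_) main
  simp only [hQc]
  constructor
  · rintro ⟨h1, h2⟩
    refine ⟨?_, ?_⟩
    · intro hc
      rw [← hdvdNat, ← hdvdNat] at hc
      have hpg : p ∣ Nat.gcd ab.1 ab.2 := Nat.dvd_gcd hc.1 hc.2
      have hng : ¬ p ∣ Nat.gcd ab.1 ab.2 := by
        rw [← hp.coprime_iff_not_dvd, Nat.coprime_comm]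
        exact h1
      exact hng hpg
    · rw [hdvdInt] at h2
      rw [← h2, BFZ_cast]
      push_cast
      rfl
  · rintro ⟨h1, h2⟩
    refine ⟨?_, ?_⟩
    · rw [show (Nat.gcd (Nat.gcd ab.1 ab.2) p = 1) ↔ Nat.Coprime p (Nat.gcd ab.1 ab.2) from
        Nat.coprime_comm, hp.coprime_iff_not_dvd]
      intro hpg
      exact h1 ⟨(hdvdNat _).mp (hpg.trans (Nat.gcd_dvd_left _ _)),
        (hdvdNat _).mp (hpg.trans (Nat.gcd_dvd_right _ _))⟩
    · rw [hdvdInt, BFZ_cast]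
      push_cast
      exact h2
end

section
/- Let d ≥ 2 and let I_0,…,I_{d−1} be nonempty finite sets (intervals) of integers. Then the number of tuples (f_0,…,f_{d−1}) ∈ I_0×⋯×I_{d−1} such that the monic polynomial X^d + Σ_{i=0}^{d−1} f_i X^i has zero discriminant is at most d·∏_{i=1}^{d−1} #I_i. -/
/-- The monic integer polynomial `X^d + Σ_{i<d} c_i X^i`. -/
noncomputable def monicPoly (d : ℕ) (c : Fin d → ℤ) : Polynomial ℤ :=
  Polynomial.X ^ d + ∑ i : Fin d, Polynomial.C (c i) * Polynomial.X ^ (i : ℕ)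

open scoped Classical in
/-- The set `E^{(1)}(m,d,I)` of (coefficient tuples of) monic polynomials of degree `d` with
`i`-th coefficient in the interval `[lo i, hi i]` and nonzero discriminant. -/
noncomputable def Eset (d : ℕ) (lo hi : Fin d → ℤ) : Finset (Fin d → ℤ) :=
  (Fintype.piFinset fun j => Finset.Icc (lo j) (hi j)).filter
    fun c => disc (monicPoly d c) ≠ 0


-- AUX PART (to be appended after the pinned defs)
open Polynomial Finset

lemma sum_deg_lt (d : ℕ) (c : Fin d → ℤ) :
    (∑ i : Fin d, Polynomial.C (c i) * Polynomial.X ^ (i : ℕ)).degree < (d : WithBot ℕ) := by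
  apply lt_of_le_of_lt (degree_sum_le _ _)
  apply Finset.sup_lt_iff (by exact_mod_cast WithBot.bot_lt_coe d) |>.2
  intro i _
  apply lt_of_le_of_lt (degree_C_mul_X_pow_le _ _)
  exact_mod_cast Nat.cast_lt.2 i.isLt

lemma monicPoly_monic (d : ℕ) (c : Fin d → ℤ) : (monicPoly d c).Monic :=
  monic_X_pow_add (by exact_mod_cast sum_deg_lt d c)

lemma monicPoly_natDegree (d : ℕ) (c : Fin d → ℤ) :
    (monicPoly d c).natDegree = d := by
  unfold monicPoly
  rw [natDegree_add_eq_left_of_degree_lt, natDegree_X_pow]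
  rw [degree_X_pow]; exact sum_deg_lt d c

lemma monicPoly_update (d : ℕ) (z : Fin d) (hz : (z : ℕ) = 0) (b : Fin d → ℤ) (x : ℤ) :
    monicPoly d (Function.update b z x) = monicPoly d b + Polynomial.C (x - b z) := by
  unfold monicPoly
  rw [add_assoc]
  congr 1
  have h : ∀ i : Fin d, Polynomial.C (Function.update b z x i) * Polynomial.X ^ (i : ℕ) =
      Polynomial.C (b i) * Polynomial.X ^ (i : ℕ) +
        (if i = z then Polynomial.C (x - b z) else 0) := by
    intro i
    by_cases h : i = z
    · subst h; rw [hz]; simp [Function.update_self, map_sub]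
    · simp [Function.update_of_ne h, h]
  simp only [h, Finset.sum_add_distrib, Finset.sum_ite_eq' Finset.univ, Finset.mem_univ,
    if_true]

lemma resultant_eq_zero_of_disc (f : Polynomial ℤ) (hf : f.Monic) (h : disc f = 0) :
    _root_.resultant f (Polynomial.derivative f) = 0 := by
  unfold disc at h
  rw [Polynomial.Monic.leadingCoeff hf, Int.ediv_one] at h
  rcases mul_eq_zero.1 h with h1 | h1
  · exact absurd h1 (pow_ne_zero _ (by norm_num))
  · exact h1

set_option maxHeartbeats 2000000 in
lemma common_root_of_resultant_eq_zero (f g : Polynomial ℤ) (hf : f.Monic)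
    (hn : 1 ≤ f.natDegree) (hm : 1 ≤ g.natDegree) (h : _root_.resultant f g = 0) :
    ∃ α : ℂ, (f.map (Int.castRingHom ℂ)).eval α = 0 ∧
      (g.map (Int.castRingHom ℂ)).eval α = 0 := by
  classical
  obtain ⟨n, hn'⟩ : ∃ k, f.natDegree = k := ⟨_, rfl⟩
  obtain ⟨m, hm'⟩ : ∃ k, g.natDegree = k := ⟨_, rfl⟩
  rw [hn'] at hn; rw [hm'] at hm
  set F : Polynomial ℂ := f.map (Int.castRingHom ℂ) with hF
  set G : Polynomial ℂ := g.map (Int.castRingHom ℂ) with hG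
  have hFdeg : F.natDegree = n := by rw [hF, hf.natDegree_map, hn']
  have hGdeg : G.natDegree ≤ m := hm' ▸ natDegree_map_le
  have hF0 : F ≠ 0 := (hf.map _).ne_zero
  set M : Matrix (Fin (f.natDegree + g.natDegree)) (Fin (f.natDegree + g.natDegree)) ℂ :=
    (sylvesterMatrix f g).map (Int.castRingHom ℂ) with hM
  have hdet : M.det = 0 := by
    rw [hM, show (sylvesterMatrix f g).map ⇑(Int.castRingHom ℂ) =
      (Int.castRingHom ℂ).mapMatrix (sylvesterMatrix f g) from rfl, ← RingHom.map_det]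
    rw [_root_.resultant] at h
    rw [h]; simp
  obtain ⟨v, hv, hvM⟩ := Matrix.exists_vecMul_eq_zero_iff.2 hdet
  set w : ℕ → ℂ := fun i => if h : i < f.natDegree + g.natDegree then v ⟨i, h⟩ else 0 with hw
  set A : Polynomial ℂ := ∑ i ∈ Finset.range m, C (w i) * X ^ (m - 1 - i) with hA
  set B : Polynomial ℂ := ∑ i ∈ Finset.range n, C (w (m + i)) * X ^ (n - 1 - i) with hB
  have hAdeg : A.natDegree ≤ m - 1 := by
    apply natDegree_sum_le_of_forall_le
    intro i hi
    exact (natDegree_C_mul_le _ _).trans (by rw [natDegree_X_pow]; omega)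
  have hBdeg : B.natDegree ≤ n - 1 := by
    apply natDegree_sum_le_of_forall_le
    intro i hi
    exact (natDegree_C_mul_le _ _).trans (by rw [natDegree_X_pow]; omega)
  -- the key relation
  have key : A * F + B * G = 0 := by
    ext p
    rw [coeff_add, coeff_zero]
    by_cases hp : p < n + m
    · set j : Fin (f.natDegree + g.natDegree) := ⟨n + m - 1 - p, by omega⟩ with hjdef
      have hj := congrFun hvM j
      simp only [Matrix.vecMul, dotProduct, Pi.zero_apply] at hj
      rw [hA, hB, Finset.sum_mul, Finset.sum_mul, finset_sum_coeff, finset_sum_coeff]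
      have eF : ∀ i : ℕ, (hi : i < m) →
          (C (w i) * X ^ (m - 1 - i) * F).coeff p = w i * M ⟨i, by omega⟩ j := by
        intro i hi
        have e1 : C (w i) * X ^ (m - 1 - i) * F = C (w i) * (F * X ^ (m - 1 - i)) := by ring
        rw [e1, coeff_C_mul, coeff_mul_X_pow']
        simp only [hM, Matrix.map_apply, sylvesterMatrix, Matrix.of_apply]
        rw [if_pos (show (i : ℕ) < g.natDegree by omega)]
        congr 1
        have hjv : (j : ℕ) = n + m - 1 - p := rfl
        split_ifs with h1 h2 h2
        · rw [hF, coeff_map]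
          congr 2 <;> omega
        · rw [hF, coeff_map,
            coeff_eq_zero_of_natDegree_lt (show f.natDegree < p - (m-1-i) by omega)]
          try simp
        · exfalso; omega
        · simp
      have eG : ∀ i : ℕ, (hi : i < n) →
          (C (w (m + i)) * X ^ (n - 1 - i) * G).coeff p = w (m + i) * M ⟨m + i, by omega⟩ j := by
        intro i hi
        have e1 : C (w (m+i)) * X ^ (n - 1 - i) * G = C (w (m+i)) * (G * X ^ (n - 1 - i)) := by
          ring
        rw [e1, coeff_C_mul, coeff_mul_X_pow']
        simp only [hM, Matrix.map_apply, sylvesterMatrix, Matrix.of_apply]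
        rw [if_neg (by omega : ¬ ((m + i : ℕ) < g.natDegree))]
        congr 1
        have hjv : (j : ℕ) = n + m - 1 - p := rfl
        have hmi : m + i - g.natDegree = i := by omega
        rw [hmi]
        split_ifs with h1 h2 h2
        · rw [hG, coeff_map]
          congr 2 <;> omega
        · rw [hG, coeff_map,
            coeff_eq_zero_of_natDegree_lt (show g.natDegree < p - (n-1-i) by omega)]
          try simp
        · exfalso; omega
        · simp
      calc (∑ i ∈ Finset.range m, (C (w i) * X ^ (m - 1 - i) * F).coeff p) +
            ∑ i ∈ Finset.range n, (C (w (m + i)) * X ^ (n - 1 - i) * G).coeff p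
          = (∑ i ∈ Finset.range m,
              w i * (if h : i < f.natDegree + g.natDegree then M ⟨i, h⟩ j else 0)) +
            ∑ i ∈ Finset.range n,
              w (m + i) *
                (if h : m + i < f.natDegree + g.natDegree then M ⟨m + i, h⟩ j else 0) := by
            congr 1
            · apply Finset.sum_congr rfl
              intro i hi
              rw [Finset.mem_range] at hi
              rw [eF i hi, dif_pos (show i < f.natDegree + g.natDegree by omega)]
            · apply Finset.sum_congr rfl
              intro i hi
              rw [Finset.mem_range] at hi
              rw [eG i hi, dif_pos (show m + i < f.natDegree + g.natDegree by omega)]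
        _ = ∑ i ∈ Finset.range (m + n),
              w i * (if h : i < f.natDegree + g.natDegree then M ⟨i, h⟩ j else 0) :=
            (Finset.sum_range_add
              (fun i => w i *
                (if h : i < f.natDegree + g.natDegree then M ⟨i, h⟩ j else 0)) m n).symm
        _ = ∑ i ∈ Finset.range (f.natDegree + g.natDegree),
              w i * (if h : i < f.natDegree + g.natDegree then M ⟨i, h⟩ j else 0) := by
            rw [show m + n = f.natDegree + g.natDegree by omega]
        _ = ∑ x : Fin (f.natDegree + g.natDegree),
              w ↑x * (if h : (x : ℕ) < f.natDegree + g.natDegree then M ⟨↑x, h⟩ j else 0) :=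
            (Fin.sum_univ_eq_sum_range _ _).symm
        _ = ∑ x : Fin (f.natDegree + g.natDegree), v x * M x j := by
            apply Finset.sum_congr rfl
            intro x _
            rw [hw]
            simp [x.isLt]
        _ = 0 := hj
    · rw [coeff_eq_zero_of_natDegree_lt (lt_of_le_of_lt natDegree_mul_le (by omega)),
          coeff_eq_zero_of_natDegree_lt (lt_of_le_of_lt natDegree_mul_le (by omega)), add_zero]
  -- not both A and B are zero
  have hAB : ¬(A = 0 ∧ B = 0) := by
    rintro ⟨hA0, hB0⟩
    apply hv
    funext x
    have hwx : w ↑x = v x := by rw [hw]; simp [x.isLt]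
    by_cases hx : (x : ℕ) < m
    · have hAco : A.coeff (m - 1 - ↑x) = w ↑x := by
        rw [hA, finset_sum_coeff, Finset.sum_eq_single (x : ℕ)]
        · rw [coeff_C_mul, coeff_X_pow, if_pos rfl, mul_one]
        · intro b hb hne
          rw [Finset.mem_range] at hb
          rw [coeff_C_mul, coeff_X_pow, if_neg (by omega), mul_zero]
        · intro h'; exact absurd (Finset.mem_range.2 hx) h'
      rw [hA0, coeff_zero] at hAco
      rw [Pi.zero_apply, ← hwx, ← hAco]
    · have hx2 : (x : ℕ) - m < n := by have := x.isLt; omega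
      have hBco : B.coeff (n - 1 - ((x : ℕ) - m)) = w (m + ((x : ℕ) - m)) := by
        rw [hB, finset_sum_coeff, Finset.sum_eq_single ((x : ℕ) - m)]
        · rw [coeff_C_mul, coeff_X_pow, if_pos rfl, mul_one]
        · intro b hb hne
          rw [Finset.mem_range] at hb
          rw [coeff_C_mul, coeff_X_pow, if_neg (by omega), mul_zero]
        · intro h'; exact absurd (Finset.mem_range.2 hx2) h'
      rw [hB0, coeff_zero] at hBco
      rw [show m + ((x : ℕ) - m) = (x : ℕ) by omega] at hBco
      rw [Pi.zero_apply, ← hwx, ← hBco]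
  -- F and G are not coprime
  have hnc : ¬ IsCoprime F G := by
    intro hc
    have hdvd : F ∣ B := by
      refine hc.dvd_of_dvd_mul_right ⟨-A, ?_⟩
      linear_combination key
    by_cases hB0 : B = 0
    · have hAF : A * F = 0 := by rw [hB0, zero_mul, add_zero] at key; exact key
      rcases mul_eq_zero.1 hAF with hA0 | hF0'
      · exact hAB ⟨hA0, hB0⟩
      · exact hF0 hF0'
    · have := Polynomial.natDegree_le_of_dvd hdvd hB0
      omega
  -- common root from the gcd
  have hqu : ¬ IsUnit (EuclideanDomain.gcd F G) :=
    fun hu => hnc (EuclideanDomain.gcd_isUnit_iff.mp hu)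
  have hq0 : EuclideanDomain.gcd F G ≠ 0 :=
    fun h0 => hF0 (EuclideanDomain.gcd_eq_zero_iff.mp h0).1
  have hqdeg : 0 < (EuclideanDomain.gcd F G).degree :=
    Polynomial.degree_pos_of_ne_zero_of_nonunit hq0 hqu
  obtain ⟨α, hα⟩ := Complex.exists_root hqdeg
  exact ⟨α, eval_eq_zero_of_dvd_of_eval_eq_zero (EuclideanDomain.gcd_dvd_left F G) hα,
    eval_eq_zero_of_dvd_of_eval_eq_zero (EuclideanDomain.gcd_dvd_right F G) hα⟩

set_option maxHeartbeats 1000000 in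
open scoped Classical in
/-- for `d ≥ 2` and nonempty finite sets `I_0,…,I_{d−1} ⊆ ℤ`, the number of
tuples `(f_0,…,f_{d−1}) ∈ I_0×⋯×I_{d−1}` for which `X^d + Σ f_i X^i` has zero discriminant is
at most `d·∏_{i=1}^{d−1} #I_i`. -/
theorem card_zero_disc_le (d : ℕ) (hd : 2 ≤ d) (I : Fin d → Finset ℤ)
    (hI : ∀ j, (I j).Nonempty) :
    ((Fintype.piFinset I).filter fun c => disc (monicPoly d c) = 0).card ≤
      d * ∏ j ∈ Finset.univ.erase (⟨0, by omega⟩ : Fin d), (I j).card := by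
  classical
  have hz0 : 0 < d := by omega
  set z : Fin d := ⟨0, hz0⟩ with hz_def
  set S := (Fintype.piFinset I).filter fun c => disc (monicPoly d c) = 0 with hS
  have hmaps : ∀ c ∈ S, Function.update c z 0 ∈
      Fintype.piFinset (Function.update I z ({0} : Finset ℤ)) := by
    intro c hc
    rw [hS, Finset.mem_filter] at hc
    rw [Fintype.mem_piFinset]
    intro j
    by_cases hj : j = z
    · subst hj; simp
    · rw [Function.update_of_ne hj, Function.update_of_ne hj]
      exact Fintype.mem_piFinset.1 hc.1 j
  have hfiber : ∀ b ∈ Fintype.piFinset (Function.update I z ({0} : Finset ℤ)),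
      (S.filter fun c => Function.update c z 0 = b).card ≤ d := by
    intro b _
    set g : Polynomial ℤ := Polynomial.derivative (monicPoly d b) with hg
    set Gq : Polynomial ℂ := g.map (Int.castRingHom ℂ) with hGq
    have hco : g.coeff (d - 1) = (d : ℤ) := by
      rw [hg, Polynomial.coeff_derivative]
      have h1 : (monicPoly d b).coeff (d - 1 + 1) = 1 := by
        rw [show d - 1 + 1 = d by omega]
        have h2 := (monicPoly_monic d b).coeff_natDegree
        rwa [monicPoly_natDegree d b] at h2
      rw [h1, one_mul]
      omega
    have hgdeg : d - 1 ≤ g.natDegree :=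
      le_natDegree_of_ne_zero (by rw [hco]; exact_mod_cast (by omega : d ≠ 0))
    have hGqne : Gq ≠ 0 := by
      intro h0
      have h1 : Gq.coeff (d - 1) = 0 := by rw [h0, coeff_zero]
      rw [hGq, coeff_map, hco] at h1
      simp only [eq_intCast, Int.cast_natCast, Nat.cast_eq_zero] at h1
      omega
    have hceq : ∀ c : Fin d → ℤ, Function.update c z 0 = b →
        c = Function.update b z (c z) := by
      intro c hcb
      funext j
      by_cases hj : j = z
      · subst hj; rw [Function.update_self]
      · rw [Function.update_of_ne hj, ← hcb, Function.update_of_ne hj]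
    have hmc : ∀ c : Fin d → ℤ, Function.update c z 0 = b →
        monicPoly d c = monicPoly d b + Polynomial.C (c z - b z) := by
      intro c hcb
      conv_lhs => rw [hceq c hcb]
      rw [monicPoly_update d z rfl b (c z)]
    have hex : ∀ c ∈ S.filter (fun c => Function.update c z 0 = b),
        ∃ α ∈ Gq.roots.toFinset,
          ((monicPoly d c).map (Int.castRingHom ℂ)).eval α = 0 := by
      intro c hc
      rw [Finset.mem_filter, hS, Finset.mem_filter] at hc
      obtain ⟨⟨hcI, hcd⟩, hcb⟩ := hc
      have hder : Polynomial.derivative (monicPoly d c) = g := by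
        rw [hg, hmc c hcb, derivative_add, derivative_C, add_zero]
      have hres : _root_.resultant (monicPoly d c) (Polynomial.derivative (monicPoly d c)) = 0 :=
        resultant_eq_zero_of_disc _ (monicPoly_monic d c) hcd
      obtain ⟨α, hα1, hα2⟩ := common_root_of_resultant_eq_zero (monicPoly d c)
        (Polynomial.derivative (monicPoly d c)) (monicPoly_monic d c)
        (by rw [monicPoly_natDegree d c]; omega)
        (by rw [hder]; omega) hres
      refine ⟨α, ?_, hα1⟩
      rw [Multiset.mem_toFinset, Polynomial.mem_roots hGqne]
      rw [hder] at hα2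
      exact hα2
    choose! φ hφ1 hφ2 using hex
    have hinj : Set.InjOn φ ↑(S.filter fun c => Function.update c z 0 = b) := by
      intro c1 hc1 c2 hc2 he
      rw [Finset.mem_coe] at hc1 hc2
      have hcb1 : Function.update c1 z 0 = b := (Finset.mem_filter.1 hc1).2
      have hcb2 : Function.update c2 z 0 = b := (Finset.mem_filter.1 hc2).2
      have e1 := hφ2 c1 hc1
      have e2 := hφ2 c2 hc2
      rw [hmc c1 hcb1, Polynomial.map_add, Polynomial.map_C, eval_add, eval_C] at e1
      rw [hmc c2 hcb2, Polynomial.map_add, Polynomial.map_C, eval_add, eval_C, ← he] at e2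
      have e3 := add_left_cancel (e1.trans e2.symm)
      have e4 : c1 z - b z = c2 z - b z := by simpa using e3
      have e5 : c1 z = c2 z := by omega
      rw [hceq c1 hcb1, hceq c2 hcb2, e5]
    have hcard := Finset.card_le_card_of_injOn φ hφ1 hinj
    refine hcard.trans ?_
    calc Gq.roots.toFinset.card ≤ Multiset.card Gq.roots := Gq.roots.toFinset_card_le
      _ ≤ Gq.natDegree := Polynomial.card_roots' Gq
      _ ≤ g.natDegree := natDegree_map_le
      _ ≤ d := by
          have h3 := Polynomial.natDegree_derivative_le (monicPoly d b)
          rw [monicPoly_natDegree d b] at h3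
          rw [hg]
          omega
  have hcard := Finset.card_le_mul_card_image_of_maps_to hmaps d hfiber
  refine hcard.trans ?_
  apply Nat.mul_le_mul_left
  rw [Fintype.card_piFinset]
  rw [← Finset.prod_erase_mul Finset.univ _ (Finset.mem_univ z)]
  have hpc : ∀ j ∈ Finset.univ.erase z,
      ((Function.update I z ({0} : Finset ℤ)) j).card = (I j).card := by
    intro j hj
    rw [Function.update_of_ne (Finset.mem_erase.1 hj).1]
  rw [Finset.prod_congr rfl hpc, Function.update_self, Finset.card_singleton, mul_one]
end

section
/- Let g = aX + b ∈ ℤ[X] with a ≠ 0 and gcd(a,b) = 1. Then n_{p^k}(g) = 1 for every prime p and every k ≥ 1, hence α_p(g) = (log p)/(p²−1) for every prime p, the series Σ_p α_p(g) converges, and α(g) := Σ_p α_p(g) = Σ_p (log p)/(p²−1) = −ζ'(2)/ζ(2), where ζ is the Riemann zeta function. -/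
section AlphaAux
open Polynomial Finset ArithmeticFunction

open scoped Classical in
lemma cardFilterLin (c d : ℤ) (n : ℕ) (hn : 0 < n) (hc : IsCoprime c (n : ℤ)) :
    ((Finset.range n).filter fun x : ℕ => (n : ℤ) ∣ c * x + d).card = 1 := by
  haveI : NeZero n := ⟨hn.ne'⟩
  obtain ⟨u, v, huv⟩ := hc
  have hu : (u : ZMod n) * (c : ZMod n) = 1 := by
    have := congrArg (fun z : ℤ => (z : ZMod n)) huv
    push_cast at this
    simpa [ZMod.natCast_self] using this
  set z : ZMod n := (u : ZMod n) * (-(d : ZMod n)) with hz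
  have key : ∀ x : ZMod n, (c : ZMod n) * x + (d : ZMod n) = 0 ↔ x = z := by
    intro x
    constructor
    · intro h
      have h' : (c : ZMod n) * x = -(d : ZMod n) := by linear_combination h
      have := congrArg (fun y => (u : ZMod n) * y) h'
      simpa [hz, ← mul_assoc, hu] using this
    · rintro rfl
      have : (c : ZMod n) * z = -(d : ZMod n) := by
        rw [hz, ← mul_assoc, mul_comm (c : ZMod n) (u : ZMod n), hu, one_mul]
      linear_combination this
  have : ((Finset.range n).filter fun x : ℕ => (n : ℤ) ∣ c * x + d) = {z.val} := by
    ext x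
    simp only [Finset.mem_filter, Finset.mem_range, Finset.mem_singleton]
    constructor
    · rintro ⟨hx, hdvd⟩
      have h0 : ((c * x + d : ℤ) : ZMod n) = 0 :=
        (ZMod.intCast_zmod_eq_zero_iff_dvd _ n).mpr hdvd
      push_cast at h0
      have := (key (x : ZMod n)).mp h0
      have hxv : ((x : ZMod n)).val = x := ZMod.val_cast_of_lt hx
      rw [this] at hxv
      exact hxv.symm
    · rintro rfl
      refine ⟨ZMod.val_lt z, ?_⟩
      rw [← ZMod.intCast_zmod_eq_zero_iff_dvd]
      push_cast
      rw [ZMod.natCast_val, ZMod.cast_id]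
      exact (key z).mpr rfl
  rw [this, Finset.card_singleton]

lemma binForm_linear (a b : ℤ) (ha : a ≠ 0) (y : ℤ) :
    binForm (C a * X + C b) 1 y = b * y + a := by
  have c0 : (C a * X + C b).coeff 0 = b := by
    simp only [coeff_add, coeff_C_mul, coeff_X_zero, mul_zero, coeff_C]
    simp
  have c1 : (C a * X + C b).coeff 1 = a := by
    simp only [coeff_add, coeff_C_mul, coeff_X_one, mul_one, coeff_C, if_neg one_ne_zero, add_zero]
  rw [binForm, natDegree_linear ha, Finset.sum_range_succ, Finset.sum_range_succ,
    Finset.sum_range_zero, c0, c1]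
  ring

open scoped Classical in
lemma nRoots_eq (f : Polynomial ℤ) (p k : ℕ) : nRoots f p k =
    ((Finset.range (p ^ k)).filter fun x : ℕ => (p : ℤ) ^ k ∣ f.eval (x : ℤ)).card +
    ((Finset.range (p ^ k)).filter fun x : ℕ => p ∣ x ∧ (p : ℤ) ^ k ∣ binForm f 1 (x : ℤ)).card := by
  rw [nRoots]
  congr 1
  have himg : (do let a ← Finset.range (p ^ k); pure ((a : ℤ)))
      = (Finset.range (p ^ k)).image (fun a : ℕ => (a : ℤ)) := by
    simp only [Finset.bind_def, Finset.pure_def, Finset.sup_singleton_apply]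
    congr
    exact Subsingleton.elim _ _
  rw [himg, Finset.filter_image,
    Finset.card_image_of_injective _ (fun m n h => by exact_mod_cast h)]

lemma nRoots_linear (a b : ℤ) (ha : a ≠ 0) (hab : IsCoprime a b) (p : ℕ) (hp : p.Prime)
    (k : ℕ) (hk : 1 ≤ k) : nRoots (C a * X + C b) p k = 1 := by
  classical
  have hpk : 0 < p ^ k := pow_pos hp.pos k
  have hprime : Prime (p : ℤ) := Nat.prime_iff_prime_int.mp hp
  have hcast : (p : ℤ) ^ k = ((p ^ k : ℕ) : ℤ) := by push_cast; ring
  have hdvd_of : ∀ m : ℤ, (p : ℤ) ^ k ∣ m → (p : ℤ) ∣ m := fun m hm =>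
    dvd_trans (dvd_pow_self _ (by omega)) hm
  rw [nRoots_eq]
  by_cases hA : (p : ℤ) ∣ a
  · -- then p does not divide b
    have hB : ¬ (p : ℤ) ∣ b := fun hB =>
      hprime.not_unit (hab.isUnit_of_dvd' hA hB)
    have h1 : ((Finset.range (p ^ k)).filter
        fun x => (p : ℤ) ^ k ∣ (C a * X + C b).eval (x : ℤ)).card = 0 := by
      rw [Finset.card_eq_zero, Finset.filter_eq_empty_iff]
      intro x _ hx
      simp only [eval_add, eval_mul, eval_C, eval_X] at hx
      exact hB (by
        have h2 : (p : ℤ) ∣ a * x + b := hdvd_of _ hx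
        have h3 : (p : ℤ) ∣ a * x := hA.mul_right x
        simpa using h2.sub h3)
    have h2 : ((Finset.range (p ^ k)).filter
        fun x => p ∣ x ∧ (p : ℤ) ^ k ∣ binForm (C a * X + C b) 1 (x : ℤ)).card = 1 := by
      have heq : ((Finset.range (p ^ k)).filter
          fun x => p ∣ x ∧ (p : ℤ) ^ k ∣ binForm (C a * X + C b) 1 (x : ℤ)) =
          ((Finset.range (p ^ k)).filter
          fun x : ℕ => ((p ^ k : ℕ) : ℤ) ∣ b * x + a) := by
        apply Finset.filter_congr
        intro x _
        rw [binForm_linear a b ha, ← hcast]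
        constructor
        · exact fun h => h.2
        · intro h
          refine ⟨?_, h⟩
          have hpd : (p : ℤ) ∣ b * x + a := hdvd_of _ h
          have hbx : (p : ℤ) ∣ b * x := by
            have := hpd.sub (hA.mul_left 1)
            simpa using this
          rcases hprime.dvd_mul.mp hbx with h' | h'
          · exact absurd h' hB
          · exact_mod_cast h'
      rw [heq]
      refine cardFilterLin b a (p ^ k) hpk ?_
      rw [← hcast]
      exact (IsCoprime.pow_right ((hprime.coprime_iff_not_dvd.mpr hB).symm))
    rw [h1, h2]
  · -- p does not divide a
    have h1 : ((Finset.range (p ^ k)).filter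
        fun x => (p : ℤ) ^ k ∣ (C a * X + C b).eval (x : ℤ)).card = 1 := by
      have heq : ((Finset.range (p ^ k)).filter
          fun x => (p : ℤ) ^ k ∣ (C a * X + C b).eval (x : ℤ)) =
          ((Finset.range (p ^ k)).filter
          fun x : ℕ => ((p ^ k : ℕ) : ℤ) ∣ a * x + b) := by
        apply Finset.filter_congr
        intro x _
        simp [← hcast]
      rw [heq]
      refine cardFilterLin a b (p ^ k) hpk ?_
      rw [← hcast]
      exact (IsCoprime.pow_right ((hprime.coprime_iff_not_dvd.mpr hA).symm))
    have h2 : ((Finset.range (p ^ k)).filter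
        fun x => p ∣ x ∧ (p : ℤ) ^ k ∣ binForm (C a * X + C b) 1 (x : ℤ)).card = 0 := by
      rw [Finset.card_eq_zero, Finset.filter_eq_empty_iff]
      rintro x _ ⟨hx1, hx2⟩
      rw [binForm_linear a b ha] at hx2
      have hpd : (p : ℤ) ∣ b * x + a := hdvd_of _ hx2
      have hpx : (p : ℤ) ∣ (x : ℤ) := Int.natCast_dvd_natCast.mpr hx1
      exact hA (by
        have : (p : ℤ) ∣ b * x := hpx.mul_left b
        simpa using hpd.sub this)
    rw [h1, h2]


lemma geom_aux (x : ℝ) (hx : 1 < x) : ∑' k : ℕ, x⁻¹ ^ (k + 1) = 1 / (x - 1) := by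
  have hx0 : (0:ℝ) < x := lt_trans one_pos hx
  have hr0 : (0:ℝ) ≤ x⁻¹ := inv_nonneg.mpr hx0.le
  have hr1 : x⁻¹ < 1 := inv_lt_one_of_one_lt₀ hx
  calc ∑' k : ℕ, x⁻¹ ^ (k + 1) = ∑' k : ℕ, x⁻¹ ^ k * x⁻¹ := by
        simp [pow_succ]
    _ = (1 - x⁻¹)⁻¹ * x⁻¹ := by rw [tsum_mul_right, tsum_geometric_of_lt_one hr0 hr1]
    _ = 1 / (x - 1) := by
        rw [div_eq_mul_inv, one_mul]
        rw [← mul_inv]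
        congr 1
        field_simp

lemma summable_vonMangoldt_div_sq : Summable (fun n : ℕ => Λ n / (n : ℝ) ^ 2) := by
  have h2 : (1 : ℝ) < (2 : ℂ).re := by norm_num
  have hs := LSeriesSummable_vonMangoldt h2
  have hn := hs.norm
  refine hn.congr fun n => ?_
  rcases eq_or_ne n 0 with rfl | hn0
  · simp [LSeries.term]
  · rw [LSeries.term_of_ne_zero hn0]
    rw [norm_div, Complex.norm_real, Real.norm_eq_abs, abs_of_nonneg vonMangoldt_nonneg]
    congr 1
    have : ((n:ℂ) ^ (2:ℂ)) = (n:ℂ) ^ (2:ℕ) := by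
      rw [show ((2:ℂ)) = ((2:ℕ):ℂ) by norm_num, Complex.cpow_natCast]
    rw [this, norm_pow, Complex.norm_natCast]

lemma prime_pow_inj : Function.Injective
    (fun pk : Nat.Primes × ℕ => (pk.1 : ℕ) ^ (pk.2 + 1)) := by
  rintro ⟨p, k⟩ ⟨q, l⟩ h
  simp only at h
  have hpq : (p : ℕ) = q := by
    have hd : (p : ℕ) ∣ (q : ℕ) ^ (l + 1) := h ▸ dvd_pow_self _ (Nat.succ_ne_zero k)
    exact (Nat.prime_dvd_prime_iff_eq p.prop q.prop).mp (p.prop.dvd_of_dvd_pow hd)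
  have : k = l := by
    rw [hpq] at h
    have := Nat.pow_right_injective q.prop.two_le h
    omega
  simp only [Prod.mk.injEq]
  exact ⟨Subtype.ext hpq, this⟩

lemma fterm (p : Nat.Primes) (k : ℕ) :
    Λ (((p : ℕ) ^ (k + 1) : ℕ)) / ((((p : ℕ) ^ (k + 1) : ℕ)) : ℝ) ^ 2 =
      Real.log (p : ℕ) * ((((p : ℕ) : ℝ) ^ 2)⁻¹) ^ (k + 1) := by
  rw [vonMangoldt_apply_pow (Nat.succ_ne_zero k), vonMangoldt_apply_prime p.prop]
  rw [div_eq_mul_inv, ← inv_pow]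
  push_cast
  rw [← inv_pow, ← inv_pow, ← pow_mul, ← pow_mul, Nat.mul_comm]

lemma one_lt_sq (p : Nat.Primes) : (1:ℝ) < ((p : ℕ) : ℝ) ^ 2 :=
  one_lt_pow₀ (by exact_mod_cast p.prop.one_lt) two_ne_zero

lemma inner_tsum (p : Nat.Primes) :
    ∑' k : ℕ, Λ (((p : ℕ) ^ (k + 1) : ℕ)) / ((((p : ℕ) ^ (k + 1) : ℕ)) : ℝ) ^ 2 =
      Real.log (p : ℕ) / (((p : ℕ) : ℝ) ^ 2 - 1) := by
  rw [tsum_congr (fterm p), tsum_mul_left, geom_aux _ (one_lt_sq p), mul_one_div]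

lemma summable_G : Summable
    (fun pk : Nat.Primes × ℕ => Λ ((pk.1 : ℕ) ^ (pk.2 + 1)) / (((pk.1 : ℕ) ^ (pk.2 + 1) : ℕ) : ℝ) ^ 2) :=
  summable_vonMangoldt_div_sq.comp_injective prime_pow_inj

lemma summable_log_div_sq_sub_one :
    Summable (fun p : Nat.Primes => Real.log (p : ℕ) / (((p : ℕ) : ℝ) ^ 2 - 1)) := by
  have hnn : 0 ≤ (fun pk : Nat.Primes × ℕ =>
      Λ ((pk.1 : ℕ) ^ (pk.2 + 1)) / (((pk.1 : ℕ) ^ (pk.2 + 1) : ℕ) : ℝ) ^ 2) := by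
    intro pk
    exact div_nonneg vonMangoldt_nonneg (by positivity)
  have h := ((summable_prod_of_nonneg hnn).mp summable_G).2
  exact h.congr fun p => inner_tsum p

lemma tsum_primes_eq :
    ∑' p : Nat.Primes, Real.log (p : ℕ) / (((p : ℕ) : ℝ) ^ 2 - 1) =
      ∑' n : ℕ, Λ n / (n : ℝ) ^ 2 := by
  rw [tsum_eq_tsum_primes_of_support_subset_prime_powers summable_vonMangoldt_div_sq
    (fun n hn => by
      refine vonMangoldt_ne_zero_iff.mp fun h => hn ?_
      show Λ n / (n : ℝ) ^ 2 = 0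
      rw [h, zero_div])]
  exact (tsum_congr fun p => (inner_tsum p).symm)

lemma final_eq :
    ((∑' p : Nat.Primes, Real.log (p : ℕ) / (((p : ℕ) : ℝ) ^ 2 - 1) : ℝ) : ℂ) =
      - deriv riemannZeta 2 / riemannZeta 2 := by
  have h2 : (1 : ℝ) < (2 : ℂ).re := by norm_num
  rw [tsum_primes_eq, Complex.ofReal_tsum,
    ← LSeries_vonMangoldt_eq_deriv_riemannZeta_div h2]
  unfold LSeries
  refine tsum_congr fun n => ?_
  rcases eq_or_ne n 0 with rfl | hn0
  · simp [LSeries.term]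
  · rw [LSeries.term_of_ne_zero hn0]
    push_cast
    rw [show ((2:ℂ)) = ((2:ℕ):ℂ) by norm_num, Complex.cpow_natCast]

lemma alphaP_lin (a b : ℤ) (ha : a ≠ 0) (hab : IsCoprime a b) (p : ℕ) (hp : p.Prime) :
    alphaP (Polynomial.C a * Polynomial.X + Polynomial.C b) p =
      Real.log p / ((p : ℝ) ^ 2 - 1) := by
  have hq : (1 : ℝ) < (p : ℝ) := by exact_mod_cast hp.one_lt
  have h1 : (p : ℝ) - 1 ≠ 0 := sub_ne_zero.mpr hq.ne'
  have h2 : (p : ℝ) + 1 ≠ 0 := by positivity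
  rw [alphaP]
  have hsum : ∑' k : ℕ,
      (nRoots (Polynomial.C a * Polynomial.X + Polynomial.C b) p (k + 1) : ℝ) / (p : ℝ) ^ (k + 1)
      = 1 / ((p : ℝ) - 1) := by
    rw [tsum_congr (fun k => by
      rw [nRoots_linear a b ha hab p hp (k + 1) (Nat.le_add_left 1 k), Nat.cast_one,
        one_div, ← inv_pow])]
    exact geom_aux _ hq
  rw [hsum]
  have h3 : (p : ℝ) ^ 2 - 1 = ((p : ℝ) - 1) * ((p : ℝ) + 1) := by ring
  have key : 1 / ((p:ℝ) - 1) - (p:ℝ) / ((p:ℝ) + 1) * (1 / ((p:ℝ) - 1))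
      = 1 / (((p:ℝ) - 1) * ((p:ℝ) + 1)) := by
    field_simp
    ring
  rw [key, h3, mul_one_div]

end AlphaAux

/-- for `g = aX + b` with `a ≠ 0` and `gcd(a,b) = 1`, one has
`n_{p^k}(g) = 1` for all primes `p` and `k ≥ 1`, hence `α_p(g) = (log p)/(p²−1)`,
the series `α(g) = Σ_p α_p(g)` converges, and
`α(g) = Σ_p (log p)/(p²−1) = −ζ'(2)/ζ(2)`. -/
theorem alpha_linear (a b : ℤ) (ha : a ≠ 0) (hab : IsCoprime a b) :
    (∀ p : ℕ, p.Prime → ∀ k : ℕ, 1 ≤ k →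
      nRoots (Polynomial.C a * Polynomial.X + Polynomial.C b) p k = 1) ∧
    (∀ p : ℕ, p.Prime →
      alphaP (Polynomial.C a * Polynomial.X + Polynomial.C b) p =
        Real.log p / ((p : ℝ) ^ 2 - 1)) ∧
    Summable (fun p : Nat.Primes =>
      alphaP (Polynomial.C a * Polynomial.X + Polynomial.C b) (p : ℕ)) ∧
    (∑' p : Nat.Primes, alphaP (Polynomial.C a * Polynomial.X + Polynomial.C b) (p : ℕ)) =
      (∑' p : Nat.Primes, Real.log (p : ℕ) / (((p : ℕ) : ℝ) ^ 2 - 1)) ∧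
    ((∑' p : Nat.Primes,
        alphaP (Polynomial.C a * Polynomial.X + Polynomial.C b) (p : ℕ) : ℝ) : ℂ) =
      - deriv riemannZeta 2 / riemannZeta 2 := by
  refine ⟨fun p hp k hk => nRoots_linear a b ha hab p hp k hk,
    fun p hp => alphaP_lin a b ha hab p hp, ?_, ?_, ?_⟩
  · exact (summable_congr fun p : Nat.Primes => alphaP_lin a b ha hab p p.prop).mpr
      summable_log_div_sq_sub_one
  · exact tsum_congr fun p => alphaP_lin a b ha hab p p.prop
  · rw [tsum_congr fun p : Nat.Primes => alphaP_lin a b ha hab p p.prop]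
    exact final_eq
end

section
/- Let K be a number field of degree n over ℚ. For every complex s with Re(s) > 1, the series Σ_{I primitive} N(I)^{−s} over primitive nonzero ideals I of O_K converges absolutely and satisfies Σ_{I primitive} N(I)^{−s} = ( Σ_{I} N(I)^{−s} ) / ζ(ns), where the sum on the right is over all nonzero ideals of O_K and ζ is the Riemann zeta function. -/
open scoped NumberField

/-- An ideal of the ring of integers is primitive if it is nonzero and not divisible by
`pO_K` for any rational prime `p`. -/
def IsPrimitiveIdeal {K : Type*} [Field K] [NumberField K] (I : Ideal (𝓞 K)) : Prop :=
  I ≠ ⊥ ∧ ∀ p : ℕ, p.Prime → ¬ (Ideal.span {(p : 𝓞 K)} ∣ I)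

section PrimitiveAux

open Ideal UniqueFactorizationMonoid

variable {K : Type*} [Field K] [NumberField K]

noncomputable local instance : DecidableEq (Ideal (𝓞 K)) := Classical.decEq _

lemma myAbsNorm_pos {I : Ideal (𝓞 K)} (hI : I ≠ ⊥) : 0 < Ideal.absNorm I :=
  Nat.pos_of_ne_zero (fun h => hI (Ideal.absNorm_eq_zero_iff.mp h))

lemma myAbsNorm_span_natCast (m : ℕ) :
    Ideal.absNorm (Ideal.span {(m : 𝓞 K)}) = m ^ Module.finrank ℚ K := by
  have b := Module.Free.chooseBasis ℤ (𝓞 K)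
  rw [Ideal.absNorm_span_singleton]
  have : (m : 𝓞 K) = algebraMap ℤ (𝓞 K) (m : ℤ) := by simp
  rw [this, Algebra.norm_algebraMap_of_basis b]
  rw [← Module.finrank_eq_card_chooseBasisIndex, NumberField.RingOfIntegers.rank K]
  simp [Int.natAbs_pow]

lemma myPrime_norm_two_le {P : Ideal (𝓞 K)} (hP : Prime P) : 2 ≤ Ideal.absNorm P := by
  have h0 : Ideal.absNorm P ≠ 0 := by
    simpa using (myAbsNorm_pos (by simpa [Ideal.zero_eq_bot] using hP.ne_zero)).ne'
  have h1 : Ideal.absNorm P ≠ 1 := by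
    intro h
    exact hP.not_unit (Ideal.isUnit_iff.mpr (Ideal.absNorm_eq_one_iff.mp h))
  omega

lemma mySpan_natCast_ne_zero {p : ℕ} (hp : p ≠ 0) :
    (Ideal.span {(p : 𝓞 K)} : Ideal (𝓞 K)) ≠ 0 := by
  rw [Ideal.zero_eq_bot, Ne, Ideal.span_singleton_eq_bot]
  exact_mod_cast hp

lemma mySpan_list_prod (l : List ℕ) :
    (Ideal.span {((l.prod : ℕ) : 𝓞 K)} : Ideal (𝓞 K))
      = ((l.map (fun q : ℕ => Ideal.span {(q : 𝓞 K)})).prod : Ideal (𝓞 K)) := by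
  induction l with
  | nil => simp [Ideal.one_eq_top, Ideal.span_singleton_one]
  | cons a l ih =>
      simp only [List.prod_cons, List.map_cons]
      rw [Nat.cast_mul, ← Ideal.span_singleton_mul_span_singleton, ih]

lemma myExists_prime_dvd {P : Ideal (𝓞 K)} (hP : Prime P) :
    ∃ p : ℕ, p.Prime ∧ P ∣ Ideal.span {(p : 𝓞 K)} := by
  set N := Ideal.absNorm P with hN
  have hN2 : 2 ≤ N := myPrime_norm_two_le hP
  have hdvd : P ∣ Ideal.span {(N : 𝓞 K)} := by
    rw [Ideal.dvd_iff_le, Ideal.span_le, Set.singleton_subset_iff]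
    exact Ideal.absNorm_mem P
  rw [show N = N.primeFactorsList.prod from (Nat.prod_primeFactorsList (by omega)).symm,
    mySpan_list_prod] at hdvd
  have hdvd' : P ∣ ((N.primeFactorsList.map
      (fun q : ℕ => Ideal.span {(q : 𝓞 K)}) : List (Ideal (𝓞 K))) : Multiset (Ideal (𝓞 K))).prod := by
    simpa using hdvd
  obtain ⟨a, ha, hPa⟩ := hP.exists_mem_multiset_dvd hdvd'
  rw [Multiset.mem_coe, List.mem_map] at ha
  obtain ⟨q, hq, rfl⟩ := ha
  exact ⟨q, Nat.prime_of_mem_primeFactorsList hq, hPa⟩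

lemma myNorm_ge_p {p : ℕ} (hp : p.Prime) {Q : Ideal (𝓞 K)} (hQ : Prime Q)
    (hdvd : Q ∣ Ideal.span {(p : 𝓞 K)}) : p ≤ Ideal.absNorm Q := by
  have h1 : Ideal.absNorm Q ∣ p ^ Module.finrank ℚ K := by
    have := map_dvd Ideal.absNorm hdvd
    rwa [myAbsNorm_span_natCast] at this
  obtain ⟨k, hk, hQk⟩ := (Nat.dvd_prime_pow hp).mp h1
  have hk0 : k ≠ 0 := by
    rintro rfl
    have := myPrime_norm_two_le hQ
    simp only [pow_zero] at hQk
    omega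
  rw [hQk]
  exact Nat.le_self_pow hk0 p

lemma myCard_factors_le {p : ℕ} (hp : p.Prime) :
    (normalizedFactors (Ideal.span {(p : 𝓞 K)} : Ideal (𝓞 K))).toFinset.card
      ≤ Module.finrank ℚ K := by
  set t := normalizedFactors (Ideal.span {(p : 𝓞 K)} : Ideal (𝓞 K)) with ht
  have hne : (Ideal.span {(p : 𝓞 K)} : Ideal (𝓞 K)) ≠ 0 := mySpan_natCast_ne_zero hp.ne_zero
  have hprod : t.prod = Ideal.span {(p : 𝓞 K)} :=
    associated_iff_eq.mp (prod_normalizedFactors hne)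
  have key : p ^ Multiset.card t ≤ p ^ Module.finrank ℚ K := by
    calc p ^ Multiset.card t = ((t.map (fun _ => p)).prod : ℕ) := by
          rw [Multiset.map_const', Multiset.prod_replicate]
      _ ≤ (t.map Ideal.absNorm).prod := by
          apply Multiset.prod_map_le_prod_map
          intro Q hQ
          exact myNorm_ge_p hp (prime_of_normalized_factor Q hQ)
            (dvd_of_mem_normalizedFactors hQ)
      _ = Ideal.absNorm t.prod := (map_multiset_prod Ideal.absNorm t).symm
      _ = p ^ Module.finrank ℚ K := by rw [hprod, myAbsNorm_span_natCast]
  have hcard : Multiset.card t ≤ Module.finrank ℚ K :=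
    (Nat.pow_le_pow_iff_right hp.one_lt).mp key
  exact le_trans t.toFinset_card_le hcard

lemma myRpow_anti {a b : ℕ} {σ : ℝ} (hσ : 0 ≤ σ) (ha : 0 < a) (hab : a ≤ b) :
    (b : ℝ) ^ (-σ) ≤ (a : ℝ) ^ (-σ) := by
  have ha' : (0:ℝ) < (a:ℝ) := by exact_mod_cast ha
  have hb' : (0:ℝ) < (b:ℝ) := lt_of_lt_of_le ha' (by exact_mod_cast hab)
  rw [Real.rpow_neg ha'.le, Real.rpow_neg hb'.le]
  have h1 : (a:ℝ) ^ σ ≤ (b:ℝ) ^ σ := Real.rpow_le_rpow ha'.le (by exact_mod_cast hab) hσ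
  have h2 : (0:ℝ) < (a:ℝ) ^ σ := Real.rpow_pos_of_pos ha' σ
  exact inv_anti₀ h2 h1

set_option maxHeartbeats 2000000 in
/-- Summability of the sum over nonzero prime ideals. -/
lemma mySummable_primes {σ : ℝ} (hσ : 1 < σ) :
    Summable (fun P : {P : Ideal (𝓞 K) // Prime P} => (Ideal.absNorm P.1 : ℝ) ^ (-σ)) := by
  classical
  have hs0 : Summable (fun m : ℕ => (m : ℝ) ^ (-σ)) :=
    Real.summable_nat_rpow.mpr (by linarith)
  have hs1 : Summable (fun p : Nat.Primes => ((p : ℕ) : ℝ) ^ (-σ)) :=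
    hs0.comp_injective (fun p q hpq => Subtype.ext hpq)
  have hs2 : Summable (fun p : Nat.Primes =>
      (Module.finrank ℚ K : ℝ) * ((p : ℕ) : ℝ) ^ (-σ)) := hs1.mul_left _
  have hsummable : Summable (fun x : (Σ p : Nat.Primes,
      {Q : Ideal (𝓞 K) // Q ∈ (normalizedFactors (Ideal.span {((p : ℕ) : 𝓞 K)})).toFinset}) =>
      ((x.1 : ℕ) : ℝ) ^ (-σ)) := by
    rw [summable_sigma_of_nonneg (fun x => by positivity)]
    refine ⟨fun p => Summable.of_finite, ?_⟩
    apply Summable.of_nonneg_of_le (fun p => tsum_nonneg (fun _ => by positivity)) _ hs2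
    intro p
    have : ∑' (_ : {Q : Ideal (𝓞 K) //
        Q ∈ (normalizedFactors (Ideal.span {((p : ℕ) : 𝓞 K)})).toFinset}),
        ((p : ℕ) : ℝ) ^ (-σ)
        = ((normalizedFactors (Ideal.span {((p : ℕ) : 𝓞 K)})).toFinset.card : ℕ) •
          (((p : ℕ) : ℝ) ^ (-σ)) := by
      rw [tsum_const, Nat.card_eq_finsetCard]
    rw [this, nsmul_eq_mul]
    apply mul_le_mul_of_nonneg_right _ (by positivity)
    exact_mod_cast myCard_factors_le p.2
  have hmem : ∀ P : {P : Ideal (𝓞 K) // Prime P},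
      ∃ p : Nat.Primes, P.1 ∈ (normalizedFactors (Ideal.span {((p:ℕ) : 𝓞 K)})).toFinset ∧
        (p : ℕ) ≤ Ideal.absNorm P.1 := by
    intro P
    obtain ⟨p, pp, hdvd⟩ := myExists_prime_dvd P.2
    refine ⟨⟨p, pp⟩, ?_, myNorm_ge_p pp P.2 hdvd⟩
    rw [Multiset.mem_toFinset,
      UniqueFactorizationMonoid.mem_normalizedFactors_iff (mySpan_natCast_ne_zero pp.ne_zero)]
    exact ⟨P.2, hdvd⟩
  choose φ hφmem hφle using hmem
  have hΦinj : Function.Injective (fun P : {P : Ideal (𝓞 K) // Prime P} =>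
      (⟨φ P, ⟨P.1, hφmem P⟩⟩ : Σ p : Nat.Primes,
        {Q : Ideal (𝓞 K) // Q ∈ (normalizedFactors (Ideal.span {((p : ℕ) : 𝓞 K)})).toFinset})) := by
    intro P P' hPP
    exact Subtype.ext (congrArg (fun y : (Σ p : Nat.Primes,
      {Q : Ideal (𝓞 K) // Q ∈ (normalizedFactors (Ideal.span {((p : ℕ) : 𝓞 K)})).toFinset}) =>
        (y.2.1 : Ideal (𝓞 K))) hPP)
  have key := hsummable.comp_injective hΦinj
  refine Summable.of_nonneg_of_le (fun P => by positivity) (fun P => ?_) key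
  exact myRpow_anti (by linarith) (φ P).2.pos (hφle P)

lemma myRpowPow {a : ℝ} (ha : 0 ≤ a) (σ : ℝ) (c : ℕ) :
    ((a ^ c : ℝ)) ^ (-σ) = (a ^ (-σ)) ^ c := by
  rw [← Real.rpow_natCast a c, ← Real.rpow_mul ha, mul_comm, Real.rpow_mul ha,
    Real.rpow_natCast]

lemma myGeomBound {x : ℝ} (h0 : 0 ≤ x) (h2 : x ≤ 1/2) (M : ℕ) :
    ∑ k ∈ Finset.range M, x ^ k ≤ Real.exp (2 * x) := by
  have hx1 : x < 1 := by linarith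
  have hsum : Summable (fun k : ℕ => x ^ k) := summable_geometric_of_lt_one h0 hx1
  have h1 : ∑ k ∈ Finset.range M, x ^ k ≤ (1 - x)⁻¹ := by
    rw [← tsum_geometric_of_lt_one h0 hx1]
    exact Summable.sum_le_tsum _ (fun i _ => by positivity) hsum
  have hpos : (0:ℝ) < 1 - x := by linarith
  have h3 : (1 - x)⁻¹ ≤ 1 + 2 * x := by
    rw [inv_le_iff_one_le_mul₀ hpos]
    nlinarith
  have h4 : 1 + 2*x ≤ Real.exp (2*x) := by
    have := Real.add_one_le_exp (2*x); linarith
  linarith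

/-- Summability over all nonzero ideals. -/
lemma mySummable_ideals {σ : ℝ} (hσ : 1 < σ) :
    Summable (fun I : {I : Ideal (𝓞 K) // I ≠ ⊥} => (Ideal.absNorm I.1 : ℝ) ^ (-σ)) := by
  classical
  set x : Ideal (𝓞 K) → ℝ := fun Q => (Ideal.absNorm Q : ℝ) ^ (-σ) with hxdef
  have hx0 : ∀ Q, 0 ≤ x Q := fun Q => by positivity
  have hxhalf : ∀ Q : Ideal (𝓞 K), Prime Q → x Q ≤ 1/2 := by
    intro Q hQ
    have : x Q ≤ (2:ℝ) ^ (-σ) := by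
      rw [hxdef]
      rw [show ((2:ℝ)) = ((2:ℕ):ℝ) by norm_num]
      exact myRpow_anti (by linarith) (by norm_num) (by exact_mod_cast myPrime_norm_two_le hQ)
    have h21 : (2:ℝ) ^ (-σ) ≤ (2:ℝ) ^ (-1:ℝ) :=
      Real.rpow_le_rpow_of_exponent_le (by norm_num) (by linarith)
    rw [Real.rpow_neg_one] at h21
    calc x Q ≤ (2:ℝ)^(-σ) := this
      _ ≤ 2⁻¹ := h21
      _ = 1/2 := by norm_num
  set Pr := ∑' P : {P : Ideal (𝓞 K) // Prime P}, x P.1 with hPr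
  apply summable_of_sum_le (c := Real.exp (2 * Pr)) (fun I => hx0 _)
  intro S
  set T : Finset (Ideal (𝓞 K)) := S.biUnion (fun I => (normalizedFactors I.1).toFinset) with hT
  have hTprime : ∀ Q ∈ T, Prime Q := by
    intro Q hQ
    rw [hT, Finset.mem_biUnion] at hQ
    obtain ⟨I, _, hQI⟩ := hQ
    exact prime_of_normalized_factor Q (Multiset.mem_toFinset.mp hQI)
  have hfact : ∀ I ∈ S, I.1 = ∏ Q ∈ T, Q ^ ((normalizedFactors I.1).count Q) := by
    intro I hI
    have h1 : I.1 = (normalizedFactors I.1).prod :=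
      (associated_iff_eq.mp (prod_normalizedFactors I.2)).symm
    conv_lhs => rw [h1, Finset.prod_multiset_count]
    apply Finset.prod_subset
    · intro Q hQ
      rw [hT, Finset.mem_biUnion]; exact ⟨I, hI, hQ⟩
    · intro Q _ hQ
      rw [Multiset.count_eq_zero_of_notMem (fun h => hQ (Multiset.mem_toFinset.mpr h)), pow_zero]
  have hval : ∀ I ∈ S, (Ideal.absNorm I.1 : ℝ) ^ (-σ)
      = ∏ Q ∈ T, (x Q) ^ ((normalizedFactors I.1).count Q) := by
    intro I hI
    have h1 : (Ideal.absNorm I.1 : ℝ)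
        = ∏ Q ∈ T, ((Ideal.absNorm Q : ℝ)) ^ ((normalizedFactors I.1).count Q) := by
      conv_lhs => rw [hfact I hI, map_prod]
      push_cast
      refine Finset.prod_congr rfl (fun Q _ => by rw [map_pow]; push_cast; ring)
    rw [h1, ← Real.finset_prod_rpow _ _ (fun Q _ => by positivity)]
    exact Finset.prod_congr rfl (fun Q _ => myRpowPow (by positivity) σ _)
  set M := (S.sup fun I => Multiset.card (normalizedFactors I.1)) + 1 with hM
  have hcnt : ∀ I ∈ S, ∀ Q, (normalizedFactors I.1).count Q < M := by
    intro I hI Q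
    calc (normalizedFactors I.1).count Q ≤ Multiset.card (normalizedFactors I.1) :=
          Multiset.count_le_card _ _
      _ ≤ S.sup fun I => Multiset.card (normalizedFactors I.1) :=
          Finset.le_sup (f := fun I : {I : Ideal (𝓞 K) // I ≠ ⊥} =>
            Multiset.card (normalizedFactors I.1)) hI
      _ < M := by omega
  have step1 : ∑ I ∈ S, (Ideal.absNorm I.1 : ℝ) ^ (-σ)
      ≤ ∏ Q ∈ T, ∑ k ∈ Finset.range M, (x Q) ^ k := by
    have hψinj : ∀ I ∈ S, ∀ I' ∈ S,
        (fun Q : {Q // Q ∈ T} => (normalizedFactors I.1).count Q.1)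
          = (fun Q : {Q // Q ∈ T} => (normalizedFactors I'.1).count Q.1) → I = I' := by
      intro I hI I' hI' h
      apply Subtype.ext
      rw [hfact I hI, hfact I' hI']
      rw [← Finset.prod_coe_sort T, ← Finset.prod_coe_sort T]
      exact Finset.prod_congr rfl (fun Q _ => by rw [congrFun h Q])
    calc ∑ I ∈ S, (Ideal.absNorm I.1 : ℝ) ^ (-σ)
        = ∑ I ∈ S, ∏ Q : {Q // Q ∈ T}, (x Q.1) ^ ((normalizedFactors I.1).count Q.1) := by
          refine Finset.sum_congr rfl (fun I hI => ?_)
          rw [hval I hI, ← Finset.prod_coe_sort T]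
      _ = ∑ g ∈ S.image (fun I => (fun Q : {Q // Q ∈ T} =>
            (normalizedFactors I.1).count Q.1)), ∏ Q : {Q // Q ∈ T}, (x Q.1) ^ (g Q) := by
          rw [Finset.sum_image hψinj]
      _ ≤ ∑ g ∈ Fintype.piFinset (fun _ : {Q // Q ∈ T} => Finset.range M),
            ∏ Q : {Q // Q ∈ T}, (x Q.1) ^ (g Q) := by
          apply Finset.sum_le_sum_of_subset_of_nonneg
          · intro g hg
            rw [Finset.mem_image] at hg
            obtain ⟨I, hI, rfl⟩ := hg
            rw [Fintype.mem_piFinset]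
            intro Q
            rw [Finset.mem_range]
            exact hcnt I hI Q.1
          · intro g _ _
            exact Finset.prod_nonneg (fun Q _ => by positivity)
      _ = ∏ Q : {Q // Q ∈ T}, ∑ k ∈ Finset.range M, (x Q.1) ^ k := by
          rw [Finset.prod_univ_sum]
      _ = ∏ Q ∈ T, ∑ k ∈ Finset.range M, (x Q) ^ k :=
          Finset.prod_coe_sort T (fun Q => ∑ k ∈ Finset.range M, (x Q) ^ k)
  have step2 : ∏ Q ∈ T, ∑ k ∈ Finset.range M, (x Q) ^ k
      ≤ ∏ Q ∈ T, Real.exp (2 * x Q) := by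
    apply Finset.prod_le_prod
    · intro Q _; exact Finset.sum_nonneg (fun k _ => by positivity)
    · intro Q hQ; exact myGeomBound (hx0 Q) (hxhalf Q (hTprime Q hQ)) M
  have step3 : ∏ Q ∈ T, Real.exp (2 * x Q) ≤ Real.exp (2 * Pr) := by
    rw [← Real.exp_sum]
    apply Real.exp_le_exp.mpr
    rw [← Finset.mul_sum]
    apply mul_le_mul_of_nonneg_left _ (by norm_num)
    rw [← Finset.sum_attach T (fun Q => x Q)]
    have hinj : ∀ Q ∈ T.attach, ∀ Q' ∈ T.attach,
        (fun Q : {Q // Q ∈ T} => (⟨Q.1, hTprime Q.1 Q.2⟩ : {P : Ideal (𝓞 K) // Prime P})) Q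
          = (fun Q : {Q // Q ∈ T} => (⟨Q.1, hTprime Q.1 Q.2⟩ : {P : Ideal (𝓞 K) // Prime P})) Q'
          → Q = Q' := by
      intro Q hQ Q' hQ' h
      apply Subtype.ext
      have h2 := congrArg (fun y : {P : Ideal (𝓞 K) // Prime P} => y.1) h
      exact h2
    have hle := Summable.sum_le_tsum (f := fun P : {P : Ideal (𝓞 K) // Prime P} => x P.1)
        (T.attach.image (fun Q : {Q // Q ∈ T} =>
          (⟨Q.1, hTprime Q.1 Q.2⟩ : {P : Ideal (𝓞 K) // Prime P})))
        (fun P _ => hx0 P.1) (mySummable_primes hσ)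
    refine le_trans (le_of_eq (Finset.sum_image (f := fun P : {P : Ideal (𝓞 K) // Prime P} => x P.1) hinj).symm) hle
  calc ∑ I ∈ S, (Ideal.absNorm I.1 : ℝ) ^ (-σ) ≤ _ := step1
    _ ≤ _ := step2
    _ ≤ _ := step3

lemma mySpan_dvd_span {k m : ℕ} (h : k ∣ m) :
    (Ideal.span {(k : 𝓞 K)} : Ideal (𝓞 K)) ∣ Ideal.span {(m : 𝓞 K)} := by
  rw [Ideal.dvd_iff_le, Ideal.span_singleton_le_span_singleton]
  exact_mod_cast Nat.cast_dvd_cast (α := 𝓞 K) h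

/-- The key divisibility lemma: for primitive `J`, `span k ∣ span m * J ↔ k ∣ m`. -/
lemma myDvd_iff {J : Ideal (𝓞 K)} (hJ : IsPrimitiveIdeal J) :
    ∀ k : ℕ, 0 < k → ∀ m : ℕ, 0 < m →
      ((Ideal.span {(k : 𝓞 K)} : Ideal (𝓞 K)) ∣ Ideal.span {(m : 𝓞 K)} * J ↔ k ∣ m) := by
  intro k
  induction k using Nat.strong_induction_on with
  | _ k ih =>
    intro hk m hm
    constructor
    · intro hdvd
      rcases eq_or_lt_of_le (show 1 ≤ k from hk) with h1 | h2
      · -- k = 1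
        rw [← h1]
        exact one_dvd m
      · -- k ≥ 2
        have hpp : Nat.Prime k.minFac := Nat.minFac_prime (by omega)
        have hpk : k.minFac ∣ k := Nat.minFac_dvd k
        have hps : (Ideal.span {(k.minFac : 𝓞 K)} : Ideal (𝓞 K))
            ∣ Ideal.span {(m : 𝓞 K)} * J :=
          dvd_trans (mySpan_dvd_span hpk) hdvd
        have hpm : k.minFac ∣ m := by
          by_contra hnd
          have hcop : Nat.Coprime k.minFac m := (Nat.Prime.coprime_iff_not_dvd hpp).mpr hnd
          have hcopR : IsCoprime ((k.minFac : ℤ) : 𝓞 K) ((m : ℤ) : 𝓞 K) :=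
            (Nat.isCoprime_iff_coprime.mpr hcop).map (algebraMap ℤ (𝓞 K))
          have hcopR' : IsCoprime ((k.minFac : 𝓞 K)) ((m : 𝓞 K)) := by
            simpa using hcopR
          obtain ⟨u, v, huv⟩ := hcopR'
          have hle : J ≤ Ideal.span {(k.minFac : 𝓞 K)} := by
            intro y hy
            have hy2 : y = u * (k.minFac : 𝓞 K) * y + v * ((m : 𝓞 K) * y) := by
              calc y = (u * (k.minFac : 𝓞 K) + v * (m : 𝓞 K)) * y := by rw [huv, one_mul]
                _ = u * (k.minFac : 𝓞 K) * y + v * ((m : 𝓞 K) * y) := by ring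
            rw [hy2]
            apply Ideal.add_mem
            · exact Ideal.mul_mem_right y _
                (Ideal.mem_span_singleton.mpr ⟨u, mul_comm u _⟩)
            · apply Ideal.mul_mem_left
              have hmem : (m : 𝓞 K) * y ∈ Ideal.span {(m : 𝓞 K)} * J :=
                Submodule.mul_mem_mul (Ideal.mem_span_singleton.mpr dvd_rfl) hy
              exact Ideal.le_of_dvd hps hmem
          exact hJ.2 k.minFac hpp (Ideal.dvd_iff_le.mpr hle)
        obtain ⟨k', hkk⟩ := hpk
        obtain ⟨m', rfl⟩ := hpm
        have hk'pos : 0 < k' := by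
          rcases Nat.eq_zero_or_pos k' with h | h
          · subst h; omega
          · exact h
        have hm' : 0 < m' := Nat.pos_of_ne_zero (by rintro rfl; simp at hm)
        have hcancel : (Ideal.span {(k' : 𝓞 K)} : Ideal (𝓞 K))
            ∣ Ideal.span {(m' : 𝓞 K)} * J := by
          have h1 : (Ideal.span {((k.minFac * k' : ℕ) : 𝓞 K)} : Ideal (𝓞 K))
              = Ideal.span {(k.minFac : 𝓞 K)} * Ideal.span {(k' : 𝓞 K)} := by
            rw [Ideal.span_singleton_mul_span_singleton]; push_cast; ring_nf
          have h2 : (Ideal.span {((k.minFac * m' : ℕ) : 𝓞 K)} : Ideal (𝓞 K))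
              = Ideal.span {(k.minFac : 𝓞 K)} * Ideal.span {(m' : 𝓞 K)} := by
            rw [Ideal.span_singleton_mul_span_singleton]; push_cast; ring_nf
          have hdvd2 : Ideal.span {(k.minFac : 𝓞 K)} * Ideal.span {(k' : 𝓞 K)}
              ∣ Ideal.span {(k.minFac : 𝓞 K)} * (Ideal.span {(m' : 𝓞 K)} * J) := by
            rw [← h1, ← mul_assoc, ← h2, ← hkk]
            exact hdvd
          exact (mul_dvd_mul_iff_left (a := (Ideal.span {(k.minFac : 𝓞 K)} : Ideal (𝓞 K)))
            (mySpan_natCast_ne_zero hpp.ne_zero)).mp hdvd2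
        have hlt : k' < k := by nlinarith [hpp.two_le]
        exact (dvd_of_eq hkk).trans
          (Nat.mul_dvd_mul_left k.minFac ((ih k' hlt hk'pos m' hm').mp hcancel))
    · intro hkm
      exact dvd_mul_of_dvd_left (mySpan_dvd_span hkm) J

lemma myFinrank_pos : 0 < Module.finrank ℚ K := Module.finrank_pos

/-- The decomposition map `(m, J) ↦ span m * J`, a bijection onto nonzero ideals. -/
noncomputable def myDecomp : ℕ+ × {J : Ideal (𝓞 K) // IsPrimitiveIdeal J} →
    {I : Ideal (𝓞 K) // I ≠ ⊥} := fun x =>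
  ⟨Ideal.span {((x.1 : ℕ) : 𝓞 K)} * x.2.1, by
    apply mul_ne_zero
    · exact mySpan_natCast_ne_zero x.1.pos.ne'
    · exact x.2.2.1⟩

lemma myDecomp_bijective : Function.Bijective (myDecomp (K := K)) := by
  constructor
  · rintro ⟨m, J⟩ ⟨m', J'⟩ h
    have heq : Ideal.span {((m : ℕ) : 𝓞 K)} * J.1 = Ideal.span {((m' : ℕ) : 𝓞 K)} * J'.1 :=
      congrArg Subtype.val h
    have hdvd1 : (m : ℕ) ∣ (m' : ℕ) := by
      rw [← myDvd_iff J'.2 (m : ℕ) m.pos (m' : ℕ) m'.pos, ← heq]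
      exact dvd_mul_right _ _
    have hdvd2 : (m' : ℕ) ∣ (m : ℕ) := by
      rw [← myDvd_iff J.2 (m' : ℕ) m'.pos (m : ℕ) m.pos, heq]
      exact dvd_mul_right _ _
    have hmm : m = m' := PNat.coe_injective (Nat.dvd_antisymm hdvd1 hdvd2)
    subst hmm
    have hJJ : J.1 = J'.1 :=
      mul_left_cancel₀ (mySpan_natCast_ne_zero m.pos.ne') heq
    rw [Prod.mk.injEq]
    exact ⟨rfl, Subtype.ext hJJ⟩
  · rintro ⟨I, hI⟩
    classical
    set N := Ideal.absNorm I with hN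
    have hNpos : 0 < N := myAbsNorm_pos hI
    set P : ℕ → Prop := fun k => (Ideal.span {(k : 𝓞 K)} : Ideal (𝓞 K)) ∣ I with hP
    have hP1 : P 1 := by
      rw [hP]
      simp only [Nat.cast_one, Ideal.span_singleton_one, ← Ideal.one_eq_top]
      exact one_dvd I
    set m := Nat.findGreatest P N with hm
    have hm1 : 1 ≤ m := Nat.le_findGreatest hNpos hP1
    have hPm : P m := Nat.findGreatest_spec hNpos hP1
    obtain ⟨J, hJ⟩ := hPm
    have hJne : J ≠ ⊥ := by
      rintro rfl
      rw [mul_bot] at hJ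
      exact hI hJ
    have hbound : ∀ k : ℕ, P k → k ≤ N := by
      intro k hk
      have h1 : Ideal.absNorm (Ideal.span {(k : 𝓞 K)}) ∣ N := map_dvd Ideal.absNorm hk
      rw [myAbsNorm_span_natCast] at h1
      have h2 : k ^ Module.finrank ℚ K ≤ N := Nat.le_of_dvd hNpos h1
      calc k ≤ k ^ Module.finrank ℚ K := Nat.le_self_pow myFinrank_pos.ne' k
        _ ≤ N := h2
    have hJprim : IsPrimitiveIdeal J := by
      refine ⟨hJne, fun p hp hdvd => ?_⟩
      have hPpm : P (p * m) := by
        rw [hP]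
        obtain ⟨J', hJ'⟩ := hdvd
        refine ⟨J', ?_⟩
        rw [hJ, hJ']
        push_cast
        rw [← Ideal.span_singleton_mul_span_singleton]
        ring
      have hle : p * m ≤ N := hbound _ hPpm
      have : p * m ≤ m := by
        by_contra hc
        push_neg at hc
        exact Nat.findGreatest_is_greatest hc hle hPpm
      nlinarith [hp.two_le]
    exact ⟨⟨⟨m, hm1⟩, ⟨J, hJprim⟩⟩, Subtype.ext hJ.symm⟩

end PrimitiveAux

set_option maxHeartbeats 1000000 in
set_option synthInstance.maxHeartbeats 200000 in
/-- for a number field `K` of degree `n` and `Re(s) > 1`, the Dirichlet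
series over primitive ideals converges absolutely and equals the Dirichlet series over all
nonzero ideals divided by `ζ(ns)`. -/
theorem primitive_ideal_dirichlet_series (K : Type*) [Field K] [NumberField K]
    (n : ℕ) (hn : n = Module.finrank ℚ K) (s : ℂ) (hs : 1 < s.re) :
    Summable (fun I : {I : Ideal (𝓞 K) // IsPrimitiveIdeal I} =>
      ‖(Ideal.absNorm I.1 : ℂ) ^ (-s)‖) ∧
    (∑' I : {I : Ideal (𝓞 K) // IsPrimitiveIdeal I}, (Ideal.absNorm I.1 : ℂ) ^ (-s)) =
      (∑' I : {I : Ideal (𝓞 K) // I ≠ ⊥}, (Ideal.absNorm I.1 : ℂ) ^ (-s)) /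
        riemannZeta ((n : ℂ) * s) := by
  subst hn
  set n := Module.finrank ℚ K with hn
  have hn1 : 1 ≤ n := Module.finrank_pos
  have hσ : 1 < s.re := hs
  -- norm identity
  have hnorm : ∀ I : Ideal (𝓞 K), I ≠ ⊥ →
      ‖(Ideal.absNorm I : ℂ) ^ (-s)‖ = (Ideal.absNorm I : ℝ) ^ (-s.re) := by
    intro I hI
    rw [Complex.norm_natCast_cpow_of_pos (myAbsNorm_pos hI), Complex.neg_re]
  -- summability over all nonzero ideals, norm version
  have hsum_all : Summable (fun I : {I : Ideal (𝓞 K) // I ≠ ⊥} =>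
      ‖(Ideal.absNorm I.1 : ℂ) ^ (-s)‖) :=
    (mySummable_ideals hσ).congr (fun I => (hnorm I.1 I.2).symm)
  -- summability over primitive ideals, norm version
  have hincl_inj : Function.Injective (fun J : {J : Ideal (𝓞 K) // IsPrimitiveIdeal J} =>
      (⟨J.1, J.2.1⟩ : {I : Ideal (𝓞 K) // I ≠ ⊥})) := by
    intro J J' h
    have h2 : (⟨J.1, J.2.1⟩ : {I : Ideal (𝓞 K) // I ≠ ⊥}) = ⟨J'.1, J'.2.1⟩ := h
    have h3 := congrArg Subtype.val h2
    exact Subtype.ext h3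
  have hsum_prim0 := hsum_all.comp_injective hincl_inj
  have hsum_prim : Summable (fun J : {J : Ideal (𝓞 K) // IsPrimitiveIdeal J} =>
      ‖(Ideal.absNorm J.1 : ℂ) ^ (-s)‖) := hsum_prim0.congr (fun J => rfl)
  refine ⟨hsum_prim, ?_⟩
  -- re of n*s
  have hres : 1 < ((n : ℂ) * s).re := by
    have : ((n : ℂ) * s).re = (n : ℝ) * s.re := by simp [Complex.mul_re]
    rw [this]
    have hn1' : (1:ℝ) ≤ (n:ℝ) := by exact_mod_cast hn1
    nlinarith
  have hζne : riemannZeta ((n : ℂ) * s) ≠ 0 := riemannZeta_ne_zero_of_one_lt_re hres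
  -- the `a` sequence
  set a : ℕ+ → ℂ := fun m => (((m : ℕ) ^ n : ℕ) : ℂ) ^ (-s) with ha_def
  set b : {J : Ideal (𝓞 K) // IsPrimitiveIdeal J} → ℂ :=
    fun J => (Ideal.absNorm J.1 : ℂ) ^ (-s) with hb_def
  -- pointwise value of a
  have ha_val : ∀ m : ℕ+, a m = 1 / ((m : ℕ) : ℂ) ^ ((n : ℂ) * s) := by
    intro m
    have hm0 : (((m : ℕ)) : ℂ) ≠ 0 := by
      exact_mod_cast (Nat.cast_ne_zero (R := ℂ)).mpr m.pos.ne'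
    have hmn0 : ((((m : ℕ) ^ n : ℕ)) : ℂ) ≠ 0 := by
      exact_mod_cast pow_ne_zero n hm0
    have hlog : Complex.log ((((m : ℕ) ^ n : ℕ)) : ℂ)
        = (n : ℂ) * Complex.log (((m : ℕ)) : ℂ) := by
      rw [← Complex.natCast_log, ← Complex.natCast_log]
      have : (((m : ℕ) ^ n : ℕ) : ℝ) = (((m : ℕ) : ℝ)) ^ n := by push_cast; ring
      rw [this, Real.log_pow]
      push_cast
      ring
    show ((((m : ℕ) ^ n : ℕ)) : ℂ) ^ (-s) = 1 / (((m : ℕ)) : ℂ) ^ ((n : ℂ) * s)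
    rw [Complex.cpow_def_of_ne_zero hmn0, Complex.cpow_def_of_ne_zero hm0, hlog]
    rw [one_div, ← Complex.exp_neg]
    congr 1
    ring
  -- a is norm-summable
  have ha_norm : ∀ m : ℕ+, ‖a m‖ = (((m : ℕ) ^ n : ℕ) : ℝ) ^ (-s.re) := by
    intro m
    show ‖((((m : ℕ) ^ n : ℕ)) : ℂ) ^ (-s)‖ = (((m : ℕ) ^ n : ℕ) : ℝ) ^ (-s.re)
    rw [Complex.norm_natCast_cpow_of_pos (by positivity), Complex.neg_re]
  have hsum_a : Summable (fun m : ℕ+ => ‖a m‖) := by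
    have h1 : Summable (fun m : ℕ+ => ((m : ℕ) : ℝ) ^ (-s.re)) :=
      (Real.summable_nat_rpow.mpr (by linarith)).comp_injective
        (fun p q h => PNat.coe_injective h)
    apply Summable.of_nonneg_of_le (fun m => by rw [ha_norm m]; positivity) _ h1
    intro m
    rw [ha_norm m]
    exact myRpow_anti (by linarith) m.pos (Nat.le_self_pow (by omega) _)
  -- tsum of a is zeta
  have htsum_a : ∑' m : ℕ+, a m = riemannZeta ((n : ℂ) * s) := by
    have hA0 : ∀ k : ℕ, k ∉ Set.range (fun m : ℕ+ => (m : ℕ)) →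
        1 / ((k : ℕ) : ℂ) ^ ((n : ℂ) * s) = 0 := by
      intro k hk
      have hk0 : k = 0 := by
        by_contra h
        exact hk ⟨⟨k, Nat.pos_of_ne_zero h⟩, rfl⟩
      subst hk0
      rw [Nat.cast_zero, Complex.zero_cpow
        (by intro h; rw [h] at hres; exact absurd hres (by norm_num))]
      simp
    have := Function.Injective.tsum_eq (f := fun k : ℕ => 1 / ((k : ℕ) : ℂ) ^ ((n : ℂ) * s))
      (fun p q h => PNat.coe_injective h)
      (by
        intro k hk
        simp only [Function.mem_support, ne_eq] at hk
        by_contra hr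
        exact hk (hA0 k hr))
    calc ∑' m : ℕ+, a m = ∑' m : ℕ+, 1 / (((m : ℕ)) : ℂ) ^ ((n : ℂ) * s) :=
          tsum_congr ha_val
      _ = ∑' k : ℕ, 1 / ((k : ℕ) : ℂ) ^ ((n : ℂ) * s) := this
      _ = riemannZeta ((n : ℂ) * s) := (zeta_eq_tsum_one_div_nat_cpow hres).symm
  -- the decomposition
  have hdecomp : ∀ x : ℕ+ × {J : Ideal (𝓞 K) // IsPrimitiveIdeal J},
      (Ideal.absNorm (myDecomp x).1 : ℂ) ^ (-s) = a x.1 * b x.2 := by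
    rintro ⟨m, J⟩
    have h1 : Ideal.absNorm (myDecomp (m, J)).1
        = (m : ℕ) ^ n * Ideal.absNorm J.1 := by
      show Ideal.absNorm (Ideal.span {((m : ℕ) : 𝓞 K)} * J.1) = _
      rw [_root_.map_mul Ideal.absNorm, myAbsNorm_span_natCast]
    rw [h1]
    have h2 : (((m : ℕ) ^ n * Ideal.absNorm J.1 : ℕ) : ℂ)
        = ((((m : ℕ) ^ n : ℕ) : ℝ) : ℂ) * (((Ideal.absNorm J.1 : ℕ) : ℝ) : ℂ) := by
      push_cast; ring
    rw [h2, Complex.mul_cpow_ofReal_nonneg (by positivity) (by positivity)]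
    rw [ha_def, hb_def]
    norm_cast
  -- put it together
  have hmain : (∑' I : {I : Ideal (𝓞 K) // I ≠ ⊥}, (Ideal.absNorm I.1 : ℂ) ^ (-s))
      = riemannZeta ((n : ℂ) * s) *
        (∑' J : {J : Ideal (𝓞 K) // IsPrimitiveIdeal J}, (Ideal.absNorm J.1 : ℂ) ^ (-s)) := by
    have hE := (Equiv.ofBijective (myDecomp (K := K)) myDecomp_bijective).tsum_eq
      (fun I : {I : Ideal (𝓞 K) // I ≠ ⊥} => (Ideal.absNorm I.1 : ℂ) ^ (-s))
    rw [← hE]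
    calc ∑' x : ℕ+ × {J : Ideal (𝓞 K) // IsPrimitiveIdeal J},
          (Ideal.absNorm ((Equiv.ofBijective (myDecomp (K := K)) myDecomp_bijective) x).1 : ℂ)
            ^ (-s)
        = ∑' x : ℕ+ × {J : Ideal (𝓞 K) // IsPrimitiveIdeal J}, a x.1 * b x.2 :=
          tsum_congr (fun x => hdecomp x)
      _ = (∑' m : ℕ+, a m) * (∑' J : {J : Ideal (𝓞 K) // IsPrimitiveIdeal J}, b J) :=
          (tsum_mul_tsum_of_summable_norm hsum_a hsum_prim).symm
      _ = riemannZeta ((n : ℂ) * s) *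
          (∑' J : {J : Ideal (𝓞 K) // IsPrimitiveIdeal J}, (Ideal.absNorm J.1 : ℂ) ^ (-s)) := by
          rw [htsum_a]
  rw [hmain, mul_div_cancel_left₀ _ hζne]
end
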